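/- arXiv:2512.16759 — 5 statements merged into one kernel-verified Lean document; each statement's English description precedes it below -/
import Mathlib

section
/- Let E be a nonnegative random variable on a probability space, G a sub-σ-field, and f : (0,∞) → ℝ a concave function extended to [0,∞] by limits. If E[f(X)] is well-defined (i.e., min(E[f(X)⁺], E[f(X)⁻]) < ∞), then E[f(X) | G] ≤ f(E[X | G]) almost surely, where conditional expectations of nonintegrable nonnegative variables are defined via positive and negative parts. -/
open MeasureTheory ENNReal Filter Set
open scoped Classical
noncomputable section

/-- The positive part of an extended real, as an extended nonnegative real. -/
def erealPos (a : EReal) : ℝ≥0∞ := if a = ⊤ then ⊤ else ENNReal.ofReal a.toReal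

/-- Generalized expectation `E[f] = E[f⁺] - E[f⁻]`, valued in the extended reals. -/
def eexp {Ω : Type*} {mΩ : MeasurableSpace Ω} (μ : Measure Ω) (f : Ω → EReal) : EReal :=
  ((∫⁻ ω, erealPos (f ω) ∂μ : ℝ≥0∞) : EReal) - ((∫⁻ ω, erealPos (-(f ω)) ∂μ : ℝ≥0∞) : EReal)

/-- The expectation of an extended-real random variable is (well-)defined when at least one of
the expectations of its positive and negative parts is finite. -/
def ExpDefined {Ω : Type*} {mΩ : MeasurableSpace Ω} (μ : Measure Ω) (f : Ω → EReal) : Prop :=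
  (∫⁻ ω, erealPos (f ω) ∂μ) < ⊤ ∨ (∫⁻ ω, erealPos (-(f ω)) ∂μ) < ⊤

/-- Logarithm on `[0,∞]`, with `log 0 = -∞` and `log ∞ = ∞`. -/
def elog (x : ℝ≥0∞) : EReal := if x = 0 then ⊥ else if x = ⊤ then ⊤ else ((Real.log x.toReal : ℝ) : EReal)

/-- Ratio on `[0,∞]` with the conventions `0/0 = 0` and `∞/∞ = 1`. -/
def eratio (a b : ℝ≥0∞) : ℝ≥0∞ := if a = ⊤ ∧ b = ⊤ then 1 else a / b

/-- `g` is a version of the conditional expectation of the nonnegative `h` given the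
sub-σ-field `m`, under the measure `μ`. -/
def IsCondExpNN {Ω : Type*} {mΩ : MeasurableSpace Ω} (m : MeasurableSpace Ω)
    (μ : @Measure Ω mΩ) (h g : Ω → ℝ≥0∞) : Prop :=
  Measurable[m] g ∧ ∀ A : Set Ω, MeasurableSet[m] A → ∫⁻ ω in A, g ω ∂μ = ∫⁻ ω in A, h ω ∂μ

/-- `g` is a universal (θ-free) version of the conditional expectation of `h` given `m`,
simultaneously under all measures `P θ`, `θ` ranging over a set `T` of parameters. -/
def IsUnivCondExpNN {Ω Θ : Type*} {mΩ : MeasurableSpace Ω} (m : MeasurableSpace Ω)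
    (P : Θ → @Measure Ω mΩ) (T : Set Θ) (h g : Ω → ℝ≥0∞) : Prop :=
  Measurable[m] g ∧ ∀ θ ∈ T, IsCondExpNN m (P θ) h g

/-- A sub-σ-field `m` is sufficient for the family `P` over the parameter set `T`:
every nonnegative measurable function admits a universal conditional expectation given `m`. -/
def IsSufficient {Ω Θ : Type*} {mΩ : MeasurableSpace Ω} (m : MeasurableSpace Ω)
    (P : Θ → @Measure Ω mΩ) (T : Set Θ) : Prop :=
  m ≤ mΩ ∧ ∀ h : Ω → ℝ≥0∞, Measurable[mΩ] h → ∃ g, IsUnivCondExpNN m P T h g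

/-- Kullback–Leibler divergence, valued in `[0,∞]` (as an extended real):
`∫ log(dμ/dν) dμ` when `μ ≪ ν`, and `+∞` otherwise. -/
def klDiv' {Ω : Type*} {mΩ : MeasurableSpace Ω} (μ ν : Measure Ω) : EReal :=
  if μ ≪ ν then eexp μ (fun ω => elog (μ.rnDeriv ν ω)) else ⊤

/-- `F : [0,∞] → [-∞,∞]` is the extension by limits of a concave utility `f : (0,∞) → ℝ`,
i.e. `F 0 = lim_{x↓0} f x`, `F ∞ = lim_{x→∞} f x`, and `F = f` in between. -/
def IsConcaveExtension (f : ℝ → ℝ) (F : ℝ≥0∞ → EReal) : Prop :=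
  ConcaveOn ℝ (Set.Ioi 0) f ∧
  (∀ x : ℝ≥0∞, x ≠ 0 → x ≠ ⊤ → F x = ((f x.toReal : ℝ) : EReal)) ∧
  Tendsto (fun x : ℝ => ((f x : ℝ) : EReal)) (nhdsWithin 0 (Set.Ioi 0)) (nhds (F 0)) ∧
  Tendsto (fun x : ℝ => ((f x : ℝ) : EReal)) atTop (nhds (F ⊤))

namespace RB


variable {f : ℝ → ℝ}

/-- left-derivative-like slope of a concave function at `q`. -/
def lslope (f : ℝ → ℝ) (q : ℝ) : ℝ := sInf (slope f q '' Ioo 0 q)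

lemma slope_anti' (hf : ConcaveOn ℝ (Ioi 0) f) {q w x : ℝ} (hq : 0 < q) (hw : 0 < w)
    (hx : 0 < x) (hwq : w ≠ q) (hxq : x ≠ q) (hwx : w ≤ x) :
    slope f q x ≤ slope f q w :=
  hf.slope_anti hq ⟨hw, hwq⟩ ⟨hx, hxq⟩ hwx

lemma bddBelow_slopes (hf : ConcaveOn ℝ (Ioi 0) f) {q : ℝ} (hq : 0 < q) :
    slope f q (q + 1) ∈ lowerBounds (slope f q '' Ioo 0 q) := by
  rintro s ⟨w, hw, rfl⟩
  exact slope_anti' hf hq hw.1 (by linarith) (ne_of_lt hw.2) (by linarith) (by linarith [hw.2])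

lemma lslope_le_slope (hf : ConcaveOn ℝ (Ioi 0) f) {q w : ℝ} (hq : 0 < q) (hw : w ∈ Ioo 0 q) :
    lslope f q ≤ slope f q w :=
  csInf_le ⟨_, bddBelow_slopes hf hq⟩ ⟨w, hw, rfl⟩

lemma slope_le_lslope (hf : ConcaveOn ℝ (Ioi 0) f) {q x : ℝ} (hq : 0 < q) (hx : q < x) :
    slope f q x ≤ lslope f q := by
  refine le_csInf ⟨_, ⟨q/2, ⟨by linarith, by linarith⟩, rfl⟩⟩ ?_
  rintro s ⟨w, hw, rfl⟩
  exact slope_anti' hf hq hw.1 (by linarith) (ne_of_lt hw.2) (ne_of_gt hx) (by linarith [hw.2])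

/-- supporting line property -/
lemma support_line (hf : ConcaveOn ℝ (Ioi 0) f) {q x : ℝ} (hq : 0 < q) (hx : 0 < x) :
    f x ≤ f q + lslope f q * (x - q) := by
  rcases lt_trichotomy x q with h | h | h
  · have h2 := lslope_le_slope hf hq (⟨hx, h⟩ : x ∈ Ioo 0 q)
    rw [slope_def_field] at h2
    have hne : x - q < 0 := by linarith
    have h3 := mul_le_mul_of_nonpos_right h2 hne.le
    rw [div_mul_cancel₀ _ hne.ne] at h3
    linarith
  · simp [h]
  · have h2 := slope_le_lslope hf hq h
    rw [slope_def_field] at h2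
    have hne : 0 < x - q := by linarith
    have h3 := mul_le_mul_of_nonneg_right h2 hne.le
    rw [div_mul_cancel₀ _ hne.ne'] at h3
    linarith


/-- affine function extended to `[0,∞]` -/
def eline (a b : ℝ) (y : ℝ≥0∞) : EReal := (a : EReal) * (y : EReal) + (b : EReal)

lemma coe_ennreal_ne_top {y : ℝ≥0∞} (hy : y ≠ ⊤) : ((y : EReal)) = ((y.toReal : ℝ) : EReal) := by
  rw [← EReal.coe_toReal (x := (y : EReal)) (by simpa using hy) (EReal.coe_ennreal_ne_bot y),
    EReal.toReal_coe_ennreal]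

lemma eline_ne_top {a b : ℝ} {y : ℝ≥0∞} (hy : y ≠ ⊤) :
    eline a b y = ((a * y.toReal + b : ℝ) : EReal) := by
  rw [eline, coe_ennreal_ne_top hy, ← EReal.coe_mul, ← EReal.coe_add]

lemma eline_top_pos {a b : ℝ} (ha : 0 < a) : eline a b ⊤ = ⊤ := by
  rw [eline, EReal.coe_ennreal_top, EReal.coe_mul_top_of_pos ha, EReal.top_add_coe]

lemma eline_top_zero {b : ℝ} : eline 0 b ⊤ = (b : EReal) := by
  rw [eline, EReal.coe_zero, EReal.zero_mul, zero_add]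

lemma eline_top_neg {a b : ℝ} (ha : a < 0) : eline a b ⊤ = ⊥ := by
  rw [eline, EReal.coe_ennreal_top, EReal.coe_mul_top_of_neg ha, EReal.bot_add]

lemma eline_zero {a b : ℝ} : eline a b 0 = (b : EReal) := by
  rw [eline, EReal.coe_ennreal_zero, mul_zero, zero_add]

section Majorant

variable {F : ℝ≥0∞ → EReal}
  (hf : ConcaveOn ℝ (Ioi 0) f)
  (hmid : ∀ x : ℝ≥0∞, x ≠ 0 → x ≠ ⊤ → F x = ((f x.toReal : ℝ) : EReal))
  (h0 : Tendsto (fun x : ℝ => ((f x : ℝ) : EReal)) (nhdsWithin 0 (Set.Ioi 0)) (nhds (F 0)))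
  (htop : Tendsto (fun x : ℝ => ((f x : ℝ) : EReal)) atTop (nhds (F ⊤)))

include hf hmid h0 htop in
lemma majorant {q : ℝ} (hq : 0 < q) (y : ℝ≥0∞) :
    F y ≤ eline (lslope f q) (f q - lslope f q * q) y := by
  set a := lslope f q with ha
  set b := f q - a * q with hb
  have hsup : ∀ x : ℝ, 0 < x → f x ≤ a * x + b := by
    intro x hx
    have := support_line hf hq hx
    rw [hb]; linarith
  have haff : Tendsto (fun x : ℝ => ((a * x + b : ℝ) : EReal)) (nhds 0) (nhds ((a * 0 + b : ℝ) : EReal)) := by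
    apply EReal.tendsto_coe.2
    exact ((continuous_const.mul continuous_id).add continuous_const).tendsto 0
  rcases eq_or_ne y 0 with rfl | hy0
  · rw [eline_zero]
    have h2 : Tendsto (fun x : ℝ => ((a * x + b : ℝ) : EReal)) (nhdsWithin 0 (Set.Ioi 0))
        (nhds ((b : ℝ) : EReal)) := by
      simpa using haff.mono_left nhdsWithin_le_nhds
    refine le_of_tendsto_of_tendsto h0 h2 ?_
    filter_upwards [self_mem_nhdsWithin] with x (hx : 0 < x)
    exact EReal.coe_le_coe_iff.2 (hsup x hx)
  rcases eq_or_ne y ⊤ with rfl | hytop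
  · rcases lt_trichotomy a 0 with hA | hA | hA
    · rw [eline_top_neg hA]
      have h2 : Tendsto (fun x : ℝ => ((a * x + b : ℝ) : EReal)) atTop (nhds ⊥) := by
        rw [EReal.tendsto_nhds_bot_iff_real]
        intro M
        have : ∀ᶠ x : ℝ in atTop, a * x + b < M := by
          have hx : Tendsto (fun x : ℝ => a * x + b) atTop atBot :=
            tendsto_atBot_add_const_right _ b ((tendsto_const_mul_atBot_of_neg hA).2 tendsto_id)
          exact hx.eventually (eventually_lt_atBot M)
        filter_upwards [this] with x hx
        exact_mod_cast hx
      refine le_of_tendsto_of_tendsto htop h2 ?_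
      filter_upwards [eventually_gt_atTop 0] with x hx
      exact EReal.coe_le_coe_iff.2 (hsup x hx)
    · rw [hA, eline_top_zero]
      refine le_of_tendsto htop ?_
      filter_upwards [eventually_gt_atTop 0] with x hx
      have := hsup x hx
      rw [hA] at this
      simpa using EReal.coe_le_coe_iff.2 this
    · rw [eline_top_pos hA]
      exact le_top
  · rw [hmid y hy0 hytop, eline_ne_top hytop]
    exact EReal.coe_le_coe_iff.2 (hsup y.toReal (ENNReal.toReal_pos hy0 hytop))

include h0 htop hmid in
lemma majorant_const {c : ℝ} (hc : ∀ x : ℝ, 0 < x → f x ≤ c) (y : ℝ≥0∞) :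
    F y ≤ (c : EReal) := by
  rcases eq_or_ne y 0 with rfl | hy0
  · refine le_of_tendsto h0 ?_
    filter_upwards [self_mem_nhdsWithin] with x (hx : 0 < x)
    exact EReal.coe_le_coe_iff.2 (hc x hx)
  rcases eq_or_ne y ⊤ with rfl | hytop
  · refine le_of_tendsto htop ?_
    filter_upwards [eventually_gt_atTop 0] with x hx
    exact EReal.coe_le_coe_iff.2 (hc x hx)
  · rw [hmid y hy0 hytop]
    exact EReal.coe_le_coe_iff.2 (hc y.toReal (ENNReal.toReal_pos hy0 hytop))

end Majorant

lemma le_bot_of_forall {z : EReal} (h : ∀ M : ℝ, z ≤ (M : EReal)) : z ≤ ⊥ := by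
  induction z using EReal.rec with
  | bot => exact le_refl _
  | top => exact absurd (h 0) (by simp)
  | coe s =>
    have := EReal.coe_le_coe_iff.1 (h (s - 1))
    linarith

lemma le_coe_of_forall_rat {z : EReal} {r : ℝ}
    (h : ∀ c : ℚ, r < (c : ℝ) → z ≤ ((c : ℝ) : EReal)) : z ≤ (r : EReal) := by
  induction z using EReal.rec with
  | bot => exact bot_le
  | top =>
    obtain ⟨c, hc⟩ := exists_rat_gt r
    exact absurd (h c hc) (by simp)
  | coe s =>
    by_contra hlt
    push_neg at hlt
    obtain ⟨c, hc1, hc2⟩ := exists_rat_btwn (EReal.coe_lt_coe_iff.1 hlt)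
    exact absurd (EReal.coe_le_coe_iff.1 (h c hc1)) (by linarith)

lemma rat_seq (t : ℝ) : ∃ q : ℕ → ℚ, (∀ n, t < (q n : ℝ)) ∧ (∀ n, (q n : ℝ) < t + 1 / (n + 1)) ∧
    Tendsto (fun n => ((q n : ℝ))) atTop (nhds t) := by
  have he : ∀ n : ℕ, ∃ q : ℚ, t < (q : ℝ) ∧ (q : ℝ) < t + 1 / (n + 1) := by
    intro n
    refine exists_rat_btwn ?_
    have : (0:ℝ) < 1 / ((n:ℝ) + 1) := by positivity
    linarith
  choose q h1 h2 using he
  refine ⟨q, h1, h2, ?_⟩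
  have hup : Tendsto (fun n : ℕ => t + 1 / ((n : ℝ) + 1)) atTop (nhds t) := by
    have := tendsto_one_div_add_atTop_nhds_zero_nat (𝕜 := ℝ)
    simpa using tendsto_const_nhds.add this
  exact tendsto_of_tendsto_of_tendsto_of_le_of_le tendsto_const_nhds hup
    (fun n => (h1 n).le) (fun n => (h2 n).le)

section Recovery

variable {F : ℝ≥0∞ → EReal}
  (hf : ConcaveOn ℝ (Ioi 0) f)
  (hmid : ∀ x : ℝ≥0∞, x ≠ 0 → x ≠ ⊤ → F x = ((f x.toReal : ℝ) : EReal))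
  (h0 : Tendsto (fun x : ℝ => ((f x : ℝ) : EReal)) (nhdsWithin 0 (Set.Ioi 0)) (nhds (F 0)))
  (htop : Tendsto (fun x : ℝ => ((f x : ℝ) : EReal)) atTop (nhds (F ⊤)))

include hf hmid h0 htop in
lemma recovery (z : EReal) (y : ℝ≥0∞)
    (hline : ∀ q : ℚ, 0 < (q : ℝ) →
      z ≤ eline (lslope f q) (f q - lslope f q * q) y)
    (hconst : ∀ c : ℚ, (∀ x : ℝ, 0 < x → f x ≤ (c : ℝ)) → z ≤ ((c : ℝ) : EReal)) :
    z ≤ F y := by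
  rcases eq_or_ne y 0 with rfl | hy0
  · -- y = 0
    obtain ⟨q, hq1, hq2, hq3⟩ := rat_seq 0
    have hq1' : ∀ n, (0 : ℝ) < q n := by simpa using hq1
    have hqlt1 : ∀ n, (q n : ℝ) < 1 := fun n => (hq2 n).trans_le (by
      have : 1 / ((n : ℝ) + 1) ≤ 1 := by
        rw [div_le_one (by positivity)]; linarith [Nat.cast_nonneg (α := ℝ) n]
      linarith)
    have hq3' : Tendsto (fun n => ((q n : ℝ))) atTop (nhdsWithin 0 (Set.Ioi 0)) :=
      tendsto_nhdsWithin_of_tendsto_nhds_of_eventually_within _ (by simpa using hq3)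
        (Eventually.of_forall fun n => hq1' n)
    set e : ℝ → ℝ := fun x => f x - (f 1 - f x) / (1 - x) * x with he_def
    have hze : ∀ n, z ≤ ((e (q n) : ℝ) : EReal) := by
      intro n
      have h1 := hline (q n) (hq1' n)
      rw [eline_zero] at h1
      refine h1.trans (EReal.coe_le_coe_iff.2 ?_)
      have hs := slope_le_lslope hf (hq1' n) (hqlt1 n)
      rw [slope_def_field] at hs
      have hqn := hq1' n
      have hlt := hqlt1 n
      have hmul := mul_le_mul_of_nonneg_right hs hqn.le
      simp only [he_def]
      linarith
    rcases eq_or_ne (F 0) ⊤ with hFt | hFt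
    · rw [hFt]; exact le_top
    rcases eq_or_ne (F 0) ⊥ with hFb | hFb
    · -- F 0 = ⊥
      rw [hFb] at h0 ⊢
      refine le_bot_of_forall fun M => ?_
      set M₀ : ℝ := -(|f 1| + 2 * |M| + 1) with hM₀
      have hev : ∀ᶠ x in nhdsWithin 0 (Set.Ioi 0), ((f x : ℝ) : EReal) < (M₀ : EReal) :=
        h0.eventually_lt_const (by simp : (⊥ : EReal) < (M₀ : EReal))
      have hevn : ∀ᶠ n in atTop, f (q n) < M₀ := by
        filter_upwards [hq3'.eventually hev] with n hn
        exact EReal.coe_lt_coe_iff.1 hn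
      obtain ⟨n, hn⟩ := hevn.exists
      have hqn := hq1' n
      have hlt := hqlt1 n
      have habs1 := neg_abs_le (f 1)
      have habs2 := abs_nonneg M
      have habs3 := neg_abs_le M
      have habs4 := abs_nonneg (f 1)
      have hterm : 0 ≤ (f 1 - f (q n)) / (1 - (q n : ℝ)) * (q n : ℝ) := by
        refine mul_nonneg (div_nonneg ?_ (by linarith)) hqn.le
        rw [hM₀] at hn
        linarith
      have heM : e (q n) ≤ M := by
        rw [hM₀] at hn
        simp only [he_def]
        linarith
      exact (hze n).trans (EReal.coe_le_coe_iff.2 heM)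
    · -- F 0 = r
      obtain ⟨r, hFz⟩ : ∃ r : ℝ, F 0 = ((r : ℝ) : EReal) :=
        ⟨(F 0).toReal, (EReal.coe_toReal hFt hFb).symm⟩
      rw [hFz] at h0 ⊢
      have hfr : Tendsto f (nhdsWithin 0 (Set.Ioi 0)) (nhds r) := EReal.tendsto_coe.1 h0
      have hfq : Tendsto (fun n => f (q n)) atTop (nhds r) := hfr.comp hq3'
      have heq : Tendsto (fun n => e (q n)) atTop (nhds r) := by
        have h1 : Tendsto (fun n => (f 1 - f (q n)) / (1 - (q n : ℝ)) * (q n : ℝ)) atTop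
            (nhds ((f 1 - r) / (1 - 0) * 0)) := by
          refine Tendsto.mul (Tendsto.div (tendsto_const_nhds.sub hfq)
            (tendsto_const_nhds.sub (by simpa using hq3)) (by norm_num)) (by simpa using hq3)
        have := hfq.sub h1
        simpa using this
      have : Tendsto (fun n => ((e (q n) : ℝ) : EReal)) atTop (nhds ((r : ℝ) : EReal)) :=
        EReal.tendsto_coe.2 heq
      exact ge_of_tendsto this (Eventually.of_forall hze)
  rcases eq_or_ne y ⊤ with rfl | hytop
  · -- y = ⊤
    by_cases hneg : ∃ Q : ℚ, 0 < (Q : ℝ) ∧ lslope f (Q : ℝ) < 0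
    · obtain ⟨Q, hQ, hQneg⟩ := hneg
      have := hline Q hQ
      rw [eline_top_neg hQneg] at this
      exact this.trans bot_le
    · push_neg at hneg
      have hmono : ∀ x : ℝ, 0 < x → ∀ Q : ℚ, x ≤ (Q : ℝ) → f x ≤ f Q := by
        intro x hx Q hxQ
        have hQ : (0 : ℝ) < Q := lt_of_lt_of_le hx hxQ
        have := support_line hf hQ hx
        nlinarith [hneg Q hQ]
      rcases eq_or_ne (F ⊤) ⊤ with hFt | hFt
      · rw [hFt]; exact le_top
      rcases eq_or_ne (F ⊤) ⊥ with hFb | hFb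
      · -- F ⊤ = ⊥ : contradiction
        exfalso
        rw [hFb] at htop
        have hev : ∀ᶠ x : ℝ in atTop, ((f x : ℝ) : EReal) < ((f 1 - 1 : ℝ) : EReal) :=
          htop.eventually_lt_const (EReal.bot_lt_coe _)
        obtain ⟨x₀, hx₀⟩ := eventually_atTop.1 hev
        obtain ⟨Q, hQ⟩ := exists_rat_gt (max x₀ 1)
        have h1 : f (Q : ℝ) < f 1 - 1 :=
          EReal.coe_lt_coe_iff.1 (hx₀ Q ((le_max_left _ _).trans hQ.le))
        have h2 : f 1 ≤ f (Q : ℝ) := hmono 1 one_pos Q ((le_max_right _ _).trans hQ.le)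
        linarith
      · obtain ⟨r, hFz⟩ : ∃ r : ℝ, F ⊤ = ((r : ℝ) : EReal) :=
          ⟨(F ⊤).toReal, (EReal.coe_toReal hFt hFb).symm⟩
        rw [hFz] at htop ⊢
        have hfr : Tendsto f atTop (nhds r) := EReal.tendsto_coe.1 htop
        have hfn : Tendsto (fun n : ℕ => f ((n : ℚ) : ℝ)) atTop (nhds r) := by
          have : Tendsto (fun n : ℕ => ((n : ℚ) : ℝ)) atTop atTop := by
            simpa using tendsto_natCast_atTop_atTop (R := ℝ)
          exact hfr.comp this
        have hratle : ∀ Q : ℚ, 0 < (Q : ℝ) → f (Q : ℝ) ≤ r := by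
          intro Q hQ
          refine ge_of_tendsto hfn ?_
          filter_upwards [eventually_ge_atTop ⌈(Q : ℝ)⌉₊] with n hn
          refine hmono (Q : ℝ) hQ (n : ℚ) ?_
          push_cast
          exact le_trans (Nat.le_ceil _) (by exact_mod_cast hn)
        have hxle : ∀ x : ℝ, 0 < x → f x ≤ r := by
          intro x hx
          obtain ⟨Q, hQ⟩ := exists_rat_gt x
          exact (hmono x hx Q hQ.le).trans (hratle Q (hx.trans hQ))
        refine le_coe_of_forall_rat fun c hc => ?_
        exact hconst c fun x hx => (hxle x hx).trans hc.le
  · -- y finite positive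
    set t := y.toReal with ht_def
    have ht : 0 < t := ENNReal.toReal_pos hy0 hytop
    rw [hmid y hy0 hytop, ← ht_def]
    obtain ⟨q, hq1, hq2, hq3⟩ := rat_seq t
    have hq0 : ∀ n, (0 : ℝ) < q n := fun n => ht.trans (hq1 n)
    have hqlt : ∀ n, (q n : ℝ) < t + 1 := fun n => (hq2 n).trans_le (by
      have : 1 / ((n : ℝ) + 1) ≤ 1 := by
        rw [div_le_one (by positivity)]; linarith [Nat.cast_nonneg (α := ℝ) n]
      linarith)
    set K := slope f (t + 2) (t + 3) with hK_def
    have hKq : ∀ n, K ≤ lslope f (q n) := by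
      intro n
      have h1 : slope f (t + 2) (t + 3) ≤ slope f (t + 2) (q n) :=
        slope_anti' hf (by linarith) (hq0 n) (by linarith) (ne_of_lt (by linarith [hqlt n]))
          (ne_of_gt (by linarith)) (by linarith [hqlt n])
      rw [show slope f (t + 2) ((q n : ℝ)) = slope f ((q n : ℝ)) (t + 2) from slope_comm _ _ _] at h1
      have h2 : slope f (q n : ℝ) (t + 2) ≤ lslope f (q n) :=
        slope_le_lslope hf (hq0 n) (by linarith [hqlt n])
      exact h1.trans h2
    have hbound : ∀ n, z ≤ ((f t + (lslope f t - K) * ((q n : ℝ) - t) : ℝ) : EReal) := by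
      intro n
      have h1 := hline (q n) (hq0 n)
      rw [eline_ne_top hytop, ← ht_def] at h1
      refine h1.trans (EReal.coe_le_coe_iff.2 ?_)
      have hsup := support_line hf ht (hq0 n)
      have hK := hKq n
      have hq := hq1 n
      have hmul := mul_le_mul_of_nonneg_right hK (show (0:ℝ) ≤ (q n : ℝ) - t by linarith)
      linarith
    have htd : Tendsto (fun n => ((f t + (lslope f t - K) * ((q n : ℝ) - t) : ℝ) : EReal)) atTop
        (nhds ((f t : ℝ) : EReal)) := by
      refine EReal.tendsto_coe.2 ?_
      have : Tendsto (fun n => (lslope f t - K) * ((q n : ℝ) - t)) atTop (nhds ((lslope f t - K) * (t - t))) :=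
        (tendsto_const_nhds.mul (hq3.sub tendsto_const_nhds))
      simpa using tendsto_const_nhds.add this
    exact ge_of_tendsto htd (Eventually.of_forall hbound)

end Recovery


lemma eline_zero_slope {c : ℝ} (y : ℝ≥0∞) : eline 0 c y = (c : EReal) := by
  rw [eline, EReal.coe_zero, EReal.zero_mul, zero_add]

lemma erealPos_bot : erealPos ⊥ = 0 := by simp [erealPos]
lemma erealPos_top : erealPos ⊤ = ⊤ := by simp [erealPos]
lemma erealPos_coe (s : ℝ) : erealPos (s : EReal) = ENNReal.ofReal s := by
  simp [erealPos, EReal.coe_ne_top]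

lemma ofReal_max (p : ℝ) : ENNReal.ofReal p = ENNReal.ofReal (max p 0) := by
  rcases le_total p 0 with h | h
  · rw [ENNReal.ofReal_of_nonpos h, max_eq_right h, ENNReal.ofReal_zero]
  · rw [max_eq_left h]

lemma ofReal_add' (p q : ℝ) :
    ENNReal.ofReal p + ENNReal.ofReal q = ENNReal.ofReal (max p 0 + max q 0) := by
  rw [ofReal_max p, ofReal_max q, ← ENNReal.ofReal_add (le_max_right _ _) (le_max_right _ _)]

lemma ofReal_mul' {t : ℝ} (c : ℝ) (ht : 0 ≤ t) :
    ENNReal.ofReal c * ENNReal.ofReal t = ENNReal.ofReal (c * t) := by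
  rcases le_total c 0 with h | h
  · rw [ENNReal.ofReal_of_nonpos h, zero_mul, ENNReal.ofReal_of_nonpos (mul_nonpos_of_nonpos_of_nonneg h ht)]
  · rw [ENNReal.ofReal_mul h]

lemma max_sub (x : ℝ) : max x 0 - max (-x) 0 = x := by
  rcases le_total x 0 with h | h
  · rw [max_eq_right h, max_eq_left (neg_nonneg.2 h)]; ring
  · rw [max_eq_left h, max_eq_right (neg_nonpos.2 h)]; ring

lemma real_pm {s v : ℝ} (h : s ≤ v) : max s 0 + max (-v) 0 ≤ max v 0 + max (-s) 0 := by
  linarith [max_sub s, max_sub v]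

lemma P1 (a b : ℝ) (u : EReal) (x : ℝ≥0∞) (h : u ≤ eline a b x) :
    erealPos u + (ENNReal.ofReal (-a) * x + ENNReal.ofReal (-b)) ≤
    erealPos (-u) + (ENNReal.ofReal a * x + ENNReal.ofReal b) := by
  rcases eq_or_ne x ⊤ with rfl | hx
  · rcases lt_trichotomy a 0 with hA | rfl | hA
    · rw [eline_top_neg hA] at h
      rw [le_bot_iff] at h
      subst h
      rw [EReal.neg_bot, erealPos_top]
      exact le_top
    · rw [eline_top_zero] at h
      induction u using EReal.rec with
      | bot => rw [EReal.neg_bot, erealPos_top]; exact le_top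
      | top => exact absurd (top_le_iff.1 h) (EReal.coe_ne_top _)
      | coe s =>
        rw [erealPos_coe, ← EReal.coe_neg, erealPos_coe]
        have hs : s ≤ b := EReal.coe_le_coe_iff.1 h
        simp only [neg_zero, ENNReal.ofReal_zero, zero_mul, zero_add]
        rw [ofReal_add' s (-b), ofReal_add' (-s) b]
        exact ENNReal.ofReal_le_ofReal (by linarith [max_sub s, max_sub b])
    · have : ENNReal.ofReal a * (⊤ : ℝ≥0∞) = ⊤ :=
        ENNReal.mul_top (by simpa using (ENNReal.ofReal_pos.2 hA).ne')
      rw [this]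
      simp
  · rw [eline_ne_top hx] at h
    induction u using EReal.rec with
    | bot => rw [EReal.neg_bot, erealPos_top]; exact le_top
    | top => exact absurd (top_le_iff.1 h) (EReal.coe_ne_top _)
    | coe s =>
      have hs : s ≤ a * x.toReal + b := EReal.coe_le_coe_iff.1 h
      rw [erealPos_coe, ← EReal.coe_neg, erealPos_coe]
      rw [← ENNReal.ofReal_toReal hx, ofReal_mul' (-a) ENNReal.toReal_nonneg,
        ofReal_mul' a ENNReal.toReal_nonneg]
      set t := x.toReal
      rw [ofReal_add' (-a*t) (-b), ofReal_add' (a*t) b, ofReal_add' s _, ofReal_add' (-s) _]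
      refine ENNReal.ofReal_le_ofReal ?_
      have e1 : (-a) * t = -(a * t) := by ring
      rw [e1]
      have m1 := max_sub s
      have m2 := max_sub (a * t)
      have m3 := max_sub b
      have n1 : max (max (-(a*t)) 0 + max (-b) 0) 0 = max (-(a*t)) 0 + max (-b) 0 :=
        max_eq_left (by positivity)
      have n2 : max (max (a*t) 0 + max b 0) 0 = max (a*t) 0 + max b 0 :=
        max_eq_left (by positivity)
      rw [n1, n2]
      linarith

lemma P2 (a b : ℝ) (p n x : ℝ≥0∞)
    (h : p + (ENNReal.ofReal (-a) * x + ENNReal.ofReal (-b)) ≤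
      n + (ENNReal.ofReal a * x + ENNReal.ofReal b)) :
    (p : EReal) - (n : EReal) ≤ eline a b x := by
  rcases eq_or_ne n ⊤ with rfl | hn
  · rw [EReal.coe_ennreal_top, EReal.sub_top]
    exact bot_le
  rcases eq_or_ne x ⊤ with rfl | hx
  · rcases lt_trichotomy a 0 with hA | rfl | hA
    · exfalso
      have hl : ENNReal.ofReal (-a) * (⊤ : ℝ≥0∞) = ⊤ :=
        ENNReal.mul_top (by simpa using (ENNReal.ofReal_pos.2 (neg_pos.2 hA)).ne')
      rw [hl] at h
      have : ENNReal.ofReal a = 0 := ENNReal.ofReal_of_nonpos hA.le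
      rw [this, zero_mul, zero_add] at h
      simp only [add_top, top_add, top_le_iff] at h
      exact (ENNReal.add_ne_top.2 ⟨hn, ENNReal.ofReal_ne_top⟩) h
    · simp only [neg_zero, ENNReal.ofReal_zero, zero_mul, zero_add] at h
      rw [eline_top_zero]
      have hp : p ≠ ⊤ := by
        intro hp
        rw [hp, top_add, top_le_iff] at h
        exact (ENNReal.add_ne_top.2 ⟨hn, ENNReal.ofReal_ne_top⟩) h
      have hreal : p.toReal + max (-b) 0 ≤ n.toReal + max b 0 := by
        have := ENNReal.toReal_mono (ENNReal.add_ne_top.2 ⟨hn, ENNReal.ofReal_ne_top⟩) h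
        rw [ENNReal.toReal_add hp ENNReal.ofReal_ne_top,
          ENNReal.toReal_add hn ENNReal.ofReal_ne_top, ENNReal.toReal_ofReal',
          ENNReal.toReal_ofReal'] at this
        linarith
      rw [show ((p : ℝ≥0∞) : EReal) = ((p.toReal : ℝ) : EReal) by
          rw [← EReal.coe_toReal (x := (p : EReal)) (by simpa using hp) (EReal.coe_ennreal_ne_bot p),
            EReal.toReal_coe_ennreal],
        show ((n : ℝ≥0∞) : EReal) = ((n.toReal : ℝ) : EReal) by
          rw [← EReal.coe_toReal (x := (n : EReal)) (by simpa using hn) (EReal.coe_ennreal_ne_bot n),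
            EReal.toReal_coe_ennreal], ← EReal.coe_sub]
      exact EReal.coe_le_coe_iff.2 (by linarith [max_sub b])
    · rw [eline_top_pos hA]; exact le_top
  · have hterm : ∀ c : ℝ, ENNReal.ofReal c * x = ENNReal.ofReal (c * x.toReal) := by
      intro c
      conv_lhs => rw [← ENNReal.ofReal_toReal hx]
      exact ofReal_mul' c ENNReal.toReal_nonneg
    rw [hterm, hterm] at h
    have hfin : n + (ENNReal.ofReal (a * x.toReal) + ENNReal.ofReal b) ≠ ⊤ :=
      ENNReal.add_ne_top.2 ⟨hn, ENNReal.add_ne_top.2 ⟨ENNReal.ofReal_ne_top, ENNReal.ofReal_ne_top⟩⟩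
    have hp : p ≠ ⊤ := by
      intro hp
      rw [hp, top_add, top_le_iff] at h
      exact hfin h
    have hreal := ENNReal.toReal_mono hfin h
    rw [ENNReal.toReal_add hp (ENNReal.add_ne_top.2 ⟨ENNReal.ofReal_ne_top, ENNReal.ofReal_ne_top⟩),
      ENNReal.toReal_add hn (ENNReal.add_ne_top.2 ⟨ENNReal.ofReal_ne_top, ENNReal.ofReal_ne_top⟩),
      ENNReal.toReal_add ENNReal.ofReal_ne_top ENNReal.ofReal_ne_top,
      ENNReal.toReal_add ENNReal.ofReal_ne_top ENNReal.ofReal_ne_top,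
      ENNReal.toReal_ofReal', ENNReal.toReal_ofReal', ENNReal.toReal_ofReal',
      ENNReal.toReal_ofReal'] at hreal
    rw [eline_ne_top hx,
      show ((p : ℝ≥0∞) : EReal) = ((p.toReal : ℝ) : EReal) by
        rw [← EReal.coe_toReal (x := (p : EReal)) (by simpa using hp) (EReal.coe_ennreal_ne_bot p),
          EReal.toReal_coe_ennreal],
      show ((n : ℝ≥0∞) : EReal) = ((n.toReal : ℝ) : EReal) by
        rw [← EReal.coe_toReal (x := (n : EReal)) (by simpa using hn) (EReal.coe_ennreal_ne_bot n),
          EReal.toReal_coe_ennreal], ← EReal.coe_sub]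
    refine EReal.coe_le_coe_iff.2 ?_
    have hmn : -a * x.toReal = -(a * x.toReal) := by ring
    rw [hmn] at hreal
    linarith [max_sub (a * x.toReal), max_sub b]

lemma cond_line {Ω : Type*} {mΩ : MeasurableSpace Ω} (μ : Measure Ω) [IsProbabilityMeasure μ]
    (m : MeasurableSpace Ω) (hm : m ≤ mΩ)
    (X : Ω → ℝ≥0∞) (hX : Measurable[mΩ] X) (G : Ω → EReal)
    (CX : Ω → ℝ≥0∞) (hCX : IsCondExpNN m μ X CX)
    (CP : Ω → ℝ≥0∞) (hCP : IsCondExpNN m μ (fun ω => erealPos (G ω)) CP)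
    (CN : Ω → ℝ≥0∞) (hCN : IsCondExpNN m μ (fun ω => erealPos (-(G ω))) CN)
    (a b : ℝ) (hab : ∀ ω, G ω ≤ eline a b (X ω)) :
    ∀ᵐ ω ∂μ, (CP ω : EReal) - (CN ω : EReal) ≤ eline a b (CX ω) := by
  set c1 := ENNReal.ofReal (-a)
  set c2 := ENNReal.ofReal (-b)
  set d1 := ENNReal.ofReal a
  set d2 := ENNReal.ofReal b
  set g : Ω → ℝ≥0∞ := fun ω => CP ω + (c1 * CX ω + c2) with hg_def
  set h : Ω → ℝ≥0∞ := fun ω => CN ω + (d1 * CX ω + d2) with hh_def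
  have hgm : Measurable[m] g := hCP.1.add ((hCX.1.const_mul c1).add measurable_const)
  have hhm : Measurable[m] h := hCN.1.add ((hCX.1.const_mul d1).add measurable_const)
  have key : ∀ A : Set Ω, MeasurableSet[m] A → ∫⁻ ω in A, g ω ∂μ ≤ ∫⁻ ω in A, h ω ∂μ := by
    intro A hA
    have hXm : Measurable[mΩ] X := hX
    have hCXm : Measurable[mΩ] CX := hCX.1.mono hm le_rfl
    have hCPm : Measurable[mΩ] (CP) := hCP.1.mono hm le_rfl
    have hCNm : Measurable[mΩ] (CN) := hCN.1.mono hm le_rfl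
    have e1 : ∫⁻ ω in A, g ω ∂μ
        = ∫⁻ ω in A, CP ω ∂μ + (c1 * ∫⁻ ω in A, CX ω ∂μ + c2 * μ A) := by
      rw [hg_def]
      rw [lintegral_add_left hCPm, lintegral_add_left (hCXm.const_mul c1),
        lintegral_const_mul c1 hCXm, setLIntegral_const]
    have e2 : ∫⁻ ω in A, h ω ∂μ
        = ∫⁻ ω in A, CN ω ∂μ + (d1 * ∫⁻ ω in A, CX ω ∂μ + d2 * μ A) := by
      rw [hh_def]
      rw [lintegral_add_left hCNm, lintegral_add_left (hCXm.const_mul d1),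
        lintegral_const_mul d1 hCXm, setLIntegral_const]
    have e3 : ∫⁻ ω in A, (fun ω => erealPos (G ω) + (c1 * X ω + c2)) ω ∂μ
        = ∫⁻ ω in A, erealPos (G ω) ∂μ + (c1 * ∫⁻ ω in A, X ω ∂μ + c2 * μ A) := by
      beta_reduce
      rw [lintegral_add_right _ (show Measurable[mΩ] (fun ω => c1 * X ω + c2) from (hXm.const_mul c1).add measurable_const),
        lintegral_add_left (hXm.const_mul c1), lintegral_const_mul c1 hXm,
        setLIntegral_const]
    have e4 : ∫⁻ ω in A, (fun ω => erealPos (-(G ω)) + (d1 * X ω + d2)) ω ∂μ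
        = ∫⁻ ω in A, erealPos (-(G ω)) ∂μ + (d1 * ∫⁻ ω in A, X ω ∂μ + d2 * μ A) := by
      beta_reduce
      rw [lintegral_add_right _ (show Measurable[mΩ] (fun ω => d1 * X ω + d2) from (hXm.const_mul d1).add measurable_const),
        lintegral_add_left (hXm.const_mul d1), lintegral_const_mul d1 hXm,
        setLIntegral_const]
    rw [e1, e2, hCP.2 A hA, hCN.2 A hA, hCX.2 A hA, ← e3, ← e4]
    exact lintegral_mono fun ω => P1 a b (G ω) (X ω) (hab ω)
  have htrim : g ≤ᵐ[μ.trim hm] h := by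
    have : SigmaFinite (μ.trim hm) := by
      have : IsFiniteMeasure (μ.trim hm) := isFiniteMeasure_trim hm
      infer_instance
    refine @ae_le_of_forall_setLIntegral_le_of_sigmaFinite Ω m (μ.trim hm) this g h hgm ?_
    intro s hs _
    rw [restrict_trim hm μ hs, lintegral_trim hm hgm, lintegral_trim hm hhm]
    exact key s hs
  have hae : g ≤ᵐ[μ] h := ae_le_of_ae_le_trim htrim
  filter_upwards [hae] with ω hω
  exact P2 a b (CP ω) (CN ω) (CX ω) hω


end RB

/-- Generalized conditional Jensen inequality: if `X : Ω → [0,∞]` is measurable,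
`f` is a concave utility extended to `[0,∞]` by limits as `F`, and `E[F(X)]` is
well-defined, then `E[F(X) | m] ≤ F(E[X | m])` almost surely, where the conditional
expectation of the extended-real variable `F(X)` is defined through its positive and
negative parts. -/
theorem rao_blackwell_stmt0
    {Ω : Type*} {mΩ : MeasurableSpace Ω} (μ : Measure Ω) [IsProbabilityMeasure μ]
    (m : MeasurableSpace Ω) (hm : m ≤ mΩ)
    (X : Ω → ℝ≥0∞) (hX : Measurable[mΩ] X)
    (f : ℝ → ℝ) (F : ℝ≥0∞ → EReal) (hF : IsConcaveExtension f F)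
    (hdef : ExpDefined μ (fun ω => F (X ω)))
    -- `CX` is a version of `E[X | m]`
    (CX : Ω → ℝ≥0∞) (hCX : IsCondExpNN m μ X CX)
    -- `CP`, `CN` are versions of `E[(F(X))⁺ | m]`, `E[(F(X))⁻ | m]`, and `CF := CP - CN`
    (CP CN : Ω → ℝ≥0∞)
    (hCP : IsCondExpNN m μ (fun ω => erealPos (F (X ω))) CP)
    (hCN : IsCondExpNN m μ (fun ω => erealPos (-(F (X ω)))) CN)
    (CF : Ω → EReal) (hCF : ∀ ω, CF ω = ((CP ω : EReal)) - ((CN ω : EReal))) :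
    ∀ᵐ ω ∂μ, CF ω ≤ F (CX ω) := by
  obtain ⟨hcc, hmid, h0, htop⟩ := hF
  have key : ∀ (a b : ℝ), (∀ y, F y ≤ RB.eline a b y) →
      ∀ᵐ ω ∂μ, (CP ω : EReal) - (CN ω : EReal) ≤ RB.eline a b (CX ω) := fun a b hab =>
    RB.cond_line μ m hm X hX (fun ω => F (X ω)) CX hCX CP hCP CN hCN a b (fun ω => hab (X ω))
  have h1 : ∀ᵐ ω ∂μ, ∀ q : ℚ, 0 < (q : ℝ) → (CP ω : EReal) - (CN ω : EReal) ≤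
      RB.eline (RB.lslope f q) (f q - RB.lslope f q * q) (CX ω) := by
    rw [ae_all_iff]
    intro q
    by_cases hq : 0 < (q : ℝ)
    · filter_upwards [key _ _ (RB.majorant hcc hmid h0 htop hq)] with ω hω
      exact fun _ => hω
    · filter_upwards with ω h
      exact absurd h hq
  have h2 : ∀ᵐ ω ∂μ, ∀ c : ℚ, (∀ x : ℝ, 0 < x → f x ≤ (c : ℝ)) →
      (CP ω : EReal) - (CN ω : EReal) ≤ ((c : ℝ) : EReal) := by
    rw [ae_all_iff]
    intro c
    by_cases hc : ∀ x : ℝ, 0 < x → f x ≤ (c : ℝ)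
    · have hmaj : ∀ y, F y ≤ RB.eline 0 (c : ℝ) y := fun y => by
        rw [RB.eline_zero_slope]
        exact RB.majorant_const hmid h0 htop hc y
      filter_upwards [key 0 c hmaj] with ω hω _
      rw [RB.eline_zero_slope] at hω
      exact hω
    · filter_upwards with ω h
      exact absurd h hc
  filter_upwards [h1, h2] with ω hω1 hω2
  rw [hCF ω]
  exact RB.recovery hcc hmid h0 htop _ (CX ω) hω1 hω2
end
end

section
/- Let S be sufficient for Θ, E an e-variable for Θ₀, G := E_Θ[E | S], and f : (0,∞) → ℝ a concave utility function extended to [0,∞] by limits. Then for every θ ∈ Θ, E_θ[f(G)] ≥ E_θ[f(E)], provided both expectations are well-defined as elements of [-∞,∞]. -/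
open MeasureTheory ENNReal Filter Set
open scoped Classical
noncomputable section

lemma erealPos_coe (r : ℝ) : erealPos (r : EReal) = ENNReal.ofReal r := by
  simp [erealPos]

lemma erealPos_neg_coe (r : ℝ) : erealPos (-(r : EReal)) = ENNReal.ofReal (-r) := by
  rw [← EReal.coe_neg, erealPos_coe]

lemma erealPos_bot : erealPos ⊥ = 0 := by simp [erealPos]

lemma erealPos_top : erealPos ⊤ = ⊤ := by simp [erealPos]

lemma erealPos_neg_bot : erealPos (-(⊥ : EReal)) = ⊤ := by
  simp [erealPos]

lemma ofReal_key {a b : ℝ} (h : a ≤ b) :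
    ENNReal.ofReal a + ENNReal.ofReal (-b) ≤ ENNReal.ofReal b + ENNReal.ofReal (-a) := by
  rcases le_total a 0 with ha | ha <;> rcases le_total b 0 with hb | hb
  · simp only [ENNReal.ofReal_eq_zero.2 ha, zero_add]
    exact le_add_left (ENNReal.ofReal_le_ofReal (by linarith))
  · simp only [ENNReal.ofReal_eq_zero.2 ha, zero_add,
      ENNReal.ofReal_eq_zero.2 (by linarith : -b ≤ 0)]
    exact zero_le
  · have ha0 : a = 0 := le_antisymm (h.trans hb) ha
    have hb0 : b = 0 := le_antisymm hb (ha0 ▸ h)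
    simp [ha0, hb0]
  · simp only [ENNReal.ofReal_eq_zero.2 (by linarith : -a ≤ 0),
      ENNReal.ofReal_eq_zero.2 (by linarith : -b ≤ 0), add_zero]
    exact ENNReal.ofReal_le_ofReal h

lemma ereal_key {a b : EReal} (h : a ≤ b) :
    erealPos a + erealPos (-b) ≤ erealPos b + erealPos (-a) := by
  induction b using EReal.rec with
  | bot =>
    have : a = ⊥ := le_bot_iff.mp h
    simp [this, erealPos_bot, erealPos_neg_bot]
  | top => simp [erealPos_top]
  | coe b =>
    induction a using EReal.rec with
    | bot => simp [erealPos_bot, erealPos_neg_bot, erealPos_top]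
    | top => exact absurd h (by simp)
    | coe a =>
      rw [erealPos_coe, erealPos_coe, erealPos_neg_coe, erealPos_neg_coe]
      exact ofReal_key (by exact_mod_cast h)

lemma eexp_le_of {a1 b1 a2 b2 : ℝ≥0∞} (h1 : a1 < ⊤ ∨ b1 < ⊤) (h2 : a2 < ⊤ ∨ b2 < ⊤)
    (h : a1 + b2 ≤ a2 + b1) : (a1 : EReal) - (b1 : EReal) ≤ (a2 : EReal) - (b2 : EReal) := by
  by_cases hb1 : b1 = ⊤
  · rw [hb1, EReal.coe_ennreal_top, EReal.sub_top]
    exact bot_le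
  by_cases hb2 : b2 = ⊤
  · rcases h2 with h2 | h2
    · exfalso
      rw [hb2] at h
      have : a2 + b1 = ⊤ := eq_top_iff.2 (le_trans (by simp) h)
      exact absurd this (ENNReal.add_lt_top.2 ⟨h2, lt_top_iff_ne_top.2 hb1⟩).ne
    · exact absurd hb2 h2.ne
  by_cases ha2 : a2 = ⊤
  · rw [ha2, EReal.coe_ennreal_top]
    rw [← ENNReal.ofReal_toReal hb2, EReal.coe_ennreal_ofReal,
      max_eq_left ENNReal.toReal_nonneg, EReal.top_sub_coe]
    exact le_top
  have ha1 : a1 ≠ ⊤ := by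
    intro ht
    rw [ht] at h
    rw [show (⊤:ℝ≥0∞) + b2 = ⊤ from by simp] at h
    exact absurd (eq_top_iff.2 h) (ENNReal.add_lt_top.2
      ⟨lt_top_iff_ne_top.2 ha2, lt_top_iff_ne_top.2 hb1⟩).ne
  have key : a1.toReal + b2.toReal ≤ a2.toReal + b1.toReal := by
    rw [← ENNReal.toReal_add ha1 hb2, ← ENNReal.toReal_add ha2 hb1]
    exact ENNReal.toReal_le_toReal (by finiteness) (by finiteness) |>.2 h
  have e : ∀ x : ℝ≥0∞, x ≠ ⊤ → (x : EReal) = (x.toReal : ℝ) := by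
    intro x hx
    rw [← ENNReal.ofReal_toReal hx, EReal.coe_ennreal_ofReal,
      max_eq_left ENNReal.toReal_nonneg, ENNReal.toReal_ofReal ENNReal.toReal_nonneg]
  rw [e a1 ha1, e b1 hb1, e a2 ha2, e b2 hb2, ← EReal.coe_sub, ← EReal.coe_sub,
    EReal.coe_le_coe_iff]
  linarith


section Slope
variable {f : ℝ → ℝ}

lemma concave_secant_anti (hconc : ConcaveOn ℝ (Ioi 0) f) {a x y : ℝ}
    (ha : 0 < a) (hx : 0 < x) (hy : 0 < y) (hxa : x ≠ a) (hya : y ≠ a) (hxy : x ≤ y) :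
    (f y - f a) / (y - a) ≤ (f x - f a) / (x - a) := by
  have h := (hconc.neg).secant_mono (mem_Ioi.2 ha) (mem_Ioi.2 hx) (mem_Ioi.2 hy) hxa hya hxy
  simp only [Pi.neg_apply] at h
  have h2 : -((f x - f a) / (x - a)) ≤ -((f y - f a) / (y - a)) := by
    calc -((f x - f a) / (x - a)) = (-f x - -f a) / (x - a) := by ring
    _ ≤ (-f y - -f a) / (y - a) := h
    _ = -((f y - f a) / (y - a)) := by ring
  linarith

/-- Right-derivative-like supporting slope of a concave function. -/
def supSlope (f : ℝ → ℝ) (g : ℝ) : ℝ := sSup ((fun t => (f t - f g) / (t - g)) '' Ioi g)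

variable (hconc : ConcaveOn ℝ (Ioi 0) f)
include hconc

lemma supSlope_bddAbove {g : ℝ} (hg : 0 < g) :
    BddAbove ((fun t => (f t - f g) / (t - g)) '' Ioi g) := by
  refine ⟨(f (g/2) - f g) / (g/2 - g), ?_⟩
  rintro - ⟨t, ht, rfl⟩
  exact concave_secant_anti hconc hg (by linarith) (lt_trans hg ht)
    (by intro hh; linarith) (ne_of_gt ht) (by linarith [mem_Ioi.1 ht])

lemma supSlope_support {g : ℝ} (hg : 0 < g) {t : ℝ} (ht : 0 < t) :
    f t ≤ f g + supSlope f g * (t - g) := by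
  rcases lt_trichotomy t g with hlt | rfl | hgt
  · have hub : supSlope f g ≤ (f t - f g) / (t - g) := by
      apply csSup_le (Set.Nonempty.image _ nonempty_Ioi)
      rintro - ⟨u, hu, rfl⟩
      exact concave_secant_anti hconc hg ht (lt_trans hg hu) (ne_of_lt hlt) (ne_of_gt hu) (by linarith [mem_Ioi.1 hu])
    have := (le_div_iff_of_neg (by linarith : t - g < 0)).1 hub
    linarith
  · simp
  · have hmem : (f t - f g) / (t - g) ≤ supSlope f g :=
      le_csSup (supSlope_bddAbove hconc hg) ⟨t, mem_Ioi.2 hgt, rfl⟩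
    have := (div_le_iff₀ (by linarith : 0 < t - g)).1 hmem
    linarith

lemma supSlope_anti {g₁ g₂ : ℝ} (hg₁ : 0 < g₁) (h12 : g₁ < g₂) :
    supSlope f g₂ ≤ supSlope f g₁ := by
  have hg₂ : 0 < g₂ := lt_trans hg₁ h12
  have h1 : supSlope f g₂ ≤ (f g₁ - f g₂) / (g₁ - g₂) := by
    have hne : ((fun t => (f t - f g₂) / (t - g₂)) '' Ioi g₂).Nonempty :=
      Set.Nonempty.image _ nonempty_Ioi
    apply csSup_le hne
    rintro - ⟨u, hu, rfl⟩
    exact concave_secant_anti hconc hg₂ hg₁ (lt_trans hg₂ hu) (ne_of_lt h12) (ne_of_gt hu)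
      (by linarith [mem_Ioi.1 hu])
  have h2 : (f g₂ - f g₁) / (g₂ - g₁) ≤ supSlope f g₁ :=
    le_csSup (supSlope_bddAbove hconc hg₁) ⟨g₂, mem_Ioi.2 h12, rfl⟩
  have he : (f g₁ - f g₂) / (g₁ - g₂) = (f g₂ - f g₁) / (g₂ - g₁) := by
    rw [← neg_div_neg_eq]; ring_nf
  linarith [h1, h2, he ▸ h1]

/-- `supSlope` extended by `0` on nonpositive reals. -/
def supSlopeExt (f : ℝ → ℝ) (r : ℝ) : ℝ := if r ≤ 0 then 0 else supSlope f r

lemma measurable_supSlopeExt : Measurable (supSlopeExt f) := by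
  apply measurable_of_Ioi
  intro c
  have : supSlopeExt f ⁻¹' Ioi c =
      {r : ℝ | r ≤ 0 ∧ c < 0} ∪ {r : ℝ | 0 < r ∧ c < supSlope f r} := by
    ext r
    simp only [mem_preimage, mem_Ioi, mem_union, mem_setOf_eq, supSlopeExt]
    by_cases hr : r ≤ 0
    · rw [if_pos hr]
      constructor
      · intro h; exact Or.inl ⟨hr, h⟩
      · rintro (⟨_, h⟩ | ⟨h0, _⟩)
        · exact h
        · linarith
    · push_neg at hr
      rw [if_neg (not_le.2 hr)]
      constructor
      · intro h; exact Or.inr ⟨hr, h⟩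
      · rintro (⟨h0, _⟩ | ⟨_, h⟩)
        · linarith
        · exact h
  rw [this]
  apply MeasurableSet.union
  · rcases lt_or_ge c 0 with hc | hc
    · have : {r : ℝ | r ≤ 0 ∧ c < 0} = Iic 0 := by ext r; simp [hc]
      rw [this]; exact measurableSet_Iic
    · have : {r : ℝ | r ≤ 0 ∧ c < 0} = ∅ := by ext r; simp; intro _; linarith
      rw [this]; exact MeasurableSet.empty
  · apply Set.OrdConnected.measurableSet
    constructor
    intro x hx z hz y hy
    simp only [mem_setOf_eq] at hx hz ⊢
    refine ⟨lt_of_lt_of_le hx.1 hy.1, ?_⟩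
    rcases eq_or_lt_of_le hy.2 with h | h
    · rw [h]; exact hz.2
    · exact lt_of_lt_of_le hz.2 (supSlope_anti hconc (lt_of_lt_of_le hx.1 hy.1) h)
end Slope


lemma ofReal_max0 (a : ℝ) : ENNReal.ofReal a = ENNReal.ofReal (max a 0) := by
  rcases le_total a 0 with h | h
  · rw [max_eq_right h, ENNReal.ofReal_zero, ENNReal.ofReal_eq_zero.2 h]
  · rw [max_eq_left h]

lemma ofReal_key2 {u v α Gr t : ℝ} (hGr : 0 ≤ Gr) (ht : 0 ≤ t)
    (hub : u ≤ v + α * (t - Gr)) :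
    ENNReal.ofReal u + ENNReal.ofReal (-v) + ENNReal.ofReal α * ENNReal.ofReal Gr
      + ENNReal.ofReal (-α) * ENNReal.ofReal t
    ≤ ENNReal.ofReal v + ENNReal.ofReal (-u) + ENNReal.ofReal α * ENNReal.ofReal t
      + ENNReal.ofReal (-α) * ENNReal.ofReal Gr := by
  rw [ofReal_max0 α, ofReal_max0 (-α), ofReal_max0 u, ofReal_max0 (-u), ofReal_max0 v,
    ofReal_max0 (-v), ← ENNReal.ofReal_mul (le_max_right α 0),
    ← ENNReal.ofReal_mul (le_max_right α 0),
    ← ENNReal.ofReal_mul (le_max_right (-α) 0),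
    ← ENNReal.ofReal_mul (le_max_right (-α) 0)]
  rw [← ENNReal.ofReal_add (by positivity) (by positivity),
    ← ENNReal.ofReal_add (by positivity) (by positivity),
    ← ENNReal.ofReal_add (by positivity) (by positivity),
    ← ENNReal.ofReal_add (by positivity) (by positivity),
    ← ENNReal.ofReal_add (by positivity) (by positivity),
    ← ENNReal.ofReal_add (by positivity) (by positivity)]
  apply ENNReal.ofReal_le_ofReal
  have hu' : max u 0 - max (-u) 0 = u := by
    rcases le_total u 0 with h | h
    · rw [max_eq_right h, max_eq_left (neg_nonneg.2 h)]; ring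
    · rw [max_eq_left h, max_eq_right (neg_nonpos.2 h)]; ring
  have hv' : max v 0 - max (-v) 0 = v := by
    rcases le_total v 0 with h | h
    · rw [max_eq_right h, max_eq_left (neg_nonneg.2 h)]; ring
    · rw [max_eq_left h, max_eq_right (neg_nonpos.2 h)]; ring
  have hα' : max α 0 * (Gr - t) + max (-α) 0 * (t - Gr) = α * (Gr - t) := by
    rcases le_total α 0 with h | h
    · rw [max_eq_right h, max_eq_left (neg_nonneg.2 h)]; ring
    · rw [max_eq_left h, max_eq_right (neg_nonpos.2 h)]; ring
  nlinarith [hu', hv', hα', hub]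

lemma key_pointwise {F : ℝ≥0∞ → EReal} {v α Gr : ℝ} (hGr : 0 < Gr)
    (hR : ∀ t : ℝ, 0 ≤ t → F (ENNReal.ofReal t) ≤ ((v + α * (t - Gr) : ℝ) : EReal))
    (hT0 : α = 0 → F ⊤ ≤ (v : EReal)) (hTneg : α < 0 → F ⊤ = ⊥) (x : ℝ≥0∞) :
    erealPos (F x) + ENNReal.ofReal (-v) + ENNReal.ofReal α * ENNReal.ofReal Gr
      + ENNReal.ofReal (-α) * x
    ≤ ENNReal.ofReal v + erealPos (-(F x)) + ENNReal.ofReal α * x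
      + ENNReal.ofReal (-α) * ENNReal.ofReal Gr := by
  by_cases hx : x = ⊤
  · subst hx
    rcases lt_trichotomy α 0 with hα | hα | hα
    · have hR' : ENNReal.ofReal v + erealPos (-(F ⊤)) + ENNReal.ofReal α * ⊤
          + ENNReal.ofReal (-α) * ENNReal.ofReal Gr = ⊤ := by
        rw [hTneg hα, erealPos_neg_bot]
        simp
      rw [hR']
      exact le_top
    · have h := ereal_key (hT0 hα)
      rw [erealPos_coe, erealPos_neg_coe] at h
      simpa [hα] using h
    · have hR' : ENNReal.ofReal v + erealPos (-(F ⊤)) + ENNReal.ofReal α * ⊤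
          + ENNReal.ofReal (-α) * ENNReal.ofReal Gr = ⊤ := by
        rw [ENNReal.mul_top (ENNReal.ofReal_pos.2 hα).ne']
        simp
      rw [hR']
      exact le_top
  · have ht0 : (0:ℝ) ≤ x.toReal := ENNReal.toReal_nonneg
    have hxe : ENNReal.ofReal x.toReal = x := ENNReal.ofReal_toReal hx
    have hb := hR x.toReal ht0
    rw [hxe] at hb
    by_cases hbot : F x = ⊥
    · have hR' : ENNReal.ofReal v + erealPos (-(F x)) + ENNReal.ofReal α * x
          + ENNReal.ofReal (-α) * ENNReal.ofReal Gr = ⊤ := by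
        rw [hbot, erealPos_neg_bot]
        simp
      rw [hR']
      exact le_top
    · have hFtop : F x ≠ ⊤ := (lt_of_le_of_lt hb (EReal.coe_lt_top _)).ne
      obtain ⟨u, hu⟩ : ∃ u : ℝ, F x = (u : EReal) :=
        ⟨(F x).toReal, (EReal.coe_toReal hFtop hbot).symm⟩
      rw [hu] at hb ⊢
      rw [erealPos_coe, erealPos_neg_coe]
      have hub : u ≤ v + α * (x.toReal - Gr) := EReal.coe_le_coe_iff.1 hb
      rw [← hxe]
      exact ofReal_key2 hGr.le ht0 hub


lemma measurable_erealPos : Measurable erealPos := by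
  unfold erealPos
  exact Measurable.ite (measurableSet_eq) measurable_const
    (ENNReal.measurable_ofReal.comp measurable_ereal_toReal)

section FL
variable {f : ℝ → ℝ} {F : ℝ≥0∞ → EReal}

lemma measurable_F (hF : IsConcaveExtension f F) : Measurable F := by
  obtain ⟨hconc, hmid, h0, htop⟩ := hF
  set fe : ℝ → ℝ := fun r => if r ≤ 0 then f 1 else f r with hfe
  have hfe_meas : Measurable fe := by
    apply measurable_of_continuousOn_compl_singleton (0:ℝ)
    intro x hx
    have hx0 : x ≠ 0 := hx
    rcases lt_or_gt_of_ne hx0 with hlt | hgt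
    · have he : fe =ᶠ[nhds x] (fun _ => f 1) := by
        filter_upwards [Iio_mem_nhds hlt] with r hr
        simp only [hfe]
        rw [if_pos (le_of_lt (mem_Iio.1 hr))]
      exact ((continuousAt_congr he).2 continuousAt_const).continuousWithinAt
    · have hc : ContinuousAt f x :=
        (hconc.continuousOn isOpen_Ioi).continuousAt (isOpen_Ioi.mem_nhds hgt)
      have he : fe =ᶠ[nhds x] f := by
        filter_upwards [Ioi_mem_nhds hgt] with r hr
        simp only [hfe]
        rw [if_neg (not_le.2 (mem_Ioi.1 hr))]
      exact ((continuousAt_congr he).2 hc).continuousWithinAt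
  have hFeq : F = fun y => if y = 0 then F 0 else if y = ⊤ then F ⊤
      else ((fe y.toReal : ℝ) : EReal) := by
    funext y
    by_cases h0' : y = 0
    · simp [h0']
    · by_cases ht' : y = ⊤
      · simp [h0', ht']
      · have hpos : 0 < y.toReal := ENNReal.toReal_pos h0' ht'
        simp only [h0', ht', if_false, hmid y h0' ht', hfe]
        rw [if_neg (not_le.2 hpos)]
  rw [hFeq]
  exact Measurable.ite (measurableSet_eq) measurable_const
    (Measurable.ite (measurableSet_eq) measurable_const
      (measurable_coe_real_ereal.comp (hfe_meas.comp ENNReal.measurable_toReal)))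

lemma F_le_line (hF : IsConcaveExtension f F) {g : ℝ} (hg : 0 < g) (x : ℝ≥0∞) (hx : x ≠ ⊤) :
    F x ≤ ((f g + supSlope f g * (x.toReal - g) : ℝ) : EReal) := by
  obtain ⟨hconc, hmid, h0, htop⟩ := hF
  by_cases hx0 : x = 0
  · subst hx0
    simp only [ENNReal.toReal_zero]
    have tR : Tendsto (fun t : ℝ => f g + supSlope f g * (t - g)) (nhdsWithin 0 (Ioi 0))
        (nhds (f g + supSlope f g * (0 - g))) :=
      (((continuous_const.add (continuous_const.mul
        (continuous_id.sub continuous_const))).tendsto 0)).mono_left nhdsWithin_le_nhds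
    have tv : Tendsto (fun t : ℝ => ((f g + supSlope f g * (t - g) : ℝ) : EReal))
        (nhdsWithin 0 (Ioi 0)) (nhds (((f g + supSlope f g * (0 - g) : ℝ) : EReal))) :=
      EReal.tendsto_coe.2 tR
    refine le_of_tendsto_of_tendsto h0 tv ?_
    filter_upwards [eventually_mem_nhdsWithin] with t ht
    exact EReal.coe_le_coe_iff.2 (supSlope_support hconc hg ht)
  · rw [hmid x hx0 hx]
    exact EReal.coe_le_coe_iff.2 (supSlope_support hconc hg (ENNReal.toReal_pos hx0 hx))

lemma Ftop_le_of_slope_zero (hF : IsConcaveExtension f F) {g : ℝ} (hg : 0 < g)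
    (hA : supSlope f g = 0) : F ⊤ ≤ ((f g : ℝ) : EReal) := by
  obtain ⟨hconc, hmid, h0, htop⟩ := hF
  refine le_of_tendsto htop ?_
  filter_upwards [eventually_gt_atTop 0] with t ht
  have := supSlope_support hconc hg ht
  rw [hA] at this
  exact EReal.coe_le_coe_iff.2 (by linarith)

lemma Ftop_eq_bot_of_slope_neg (hF : IsConcaveExtension f F) {g : ℝ} (hg : 0 < g)
    (hA : supSlope f g < 0) : F ⊤ = ⊥ := by
  obtain ⟨hconc, hmid, h0, htop⟩ := hF
  have hM : ∀ M : ℝ, F ⊤ ≤ (M : EReal) := by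
    intro M
    refine le_of_tendsto htop ?_
    filter_upwards [eventually_ge_atTop (max 1 (g + (M - f g) / supSlope f g))] with t ht
    have h1 : (1:ℝ) ≤ t := le_trans (le_max_left _ _) ht
    have h2 : g + (M - f g) / supSlope f g ≤ t := le_trans (le_max_right _ _) ht
    have hs := supSlope_support hconc hg (by linarith : (0:ℝ) < t)
    have hd : supSlope f g * ((M - f g) / supSlope f g) = M - f g := by
      rw [mul_comm]
      exact div_mul_cancel₀ _ (ne_of_lt hA)
    have h3 := mul_le_mul_of_nonpos_left (show (M - f g) / supSlope f g ≤ t - g by linarith)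
      hA.le
    rw [hd] at h3
    exact EReal.coe_le_coe_iff.2 (by linarith)
  cases hFt : F ⊤ with
  | bot => rfl
  | top => exact absurd (hFt ▸ hM 0) (by simp)
  | coe r =>
    have := EReal.coe_le_coe_iff.1 (hFt ▸ hM (r - 1))
    linarith

lemma F_le_const (hF : IsConcaveExtension f F) {L : ℝ} (htopL : F ⊤ = (L : EReal)) :
    ∀ x : ℝ≥0∞, F x ≤ (L : EReal) := by
  obtain ⟨hconc, hmid, h0, htop⟩ := hF
  have hfL : Tendsto f atTop (nhds L) := EReal.tendsto_coe.1 (htopL ▸ htop)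
  have hf_le : ∀ t : ℝ, 0 < t → f t ≤ L := by
    by_contra hcon
    push_neg at hcon
    obtain ⟨x₀, hx₀pos, hx₀⟩ := hcon
    obtain ⟨x₁, hx₁gt, hx₁lt⟩ : ∃ x₁, x₀ < x₁ ∧ f x₁ < f x₀ := by
      have h1 := hfL.eventually (eventually_lt_nhds hx₀)
      obtain ⟨x₁, h₁, h₂⟩ := (h1.and (eventually_gt_atTop x₀)).exists
      exact ⟨x₁, h₂, h₁⟩
    set c := (f x₁ - f x₀) / (x₁ - x₀) with hc
    have hcneg : c < 0 := div_neg_of_neg_of_pos (by linarith) (by linarith)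
    have h2 := hfL.eventually (eventually_gt_nhds (show L - 1 < L by linarith))
    have h3 : ∀ᶠ z in atTop, f z ≤ f x₀ + c * (z - x₀) := by
      filter_upwards [eventually_gt_atTop x₁] with z hz
      have hsl := concave_secant_anti hconc hx₀pos (by linarith : (0:ℝ) < x₁)
        (by linarith : (0:ℝ) < z) (ne_of_gt hx₁gt) (by intro hh; linarith)
        (le_of_lt hz)
      have hzx : 0 < z - x₀ := by linarith
      have := (div_le_iff₀ hzx).1 hsl
      linarith
    have h4 : ∀ᶠ z in atTop, f x₀ + c * (z - x₀) ≤ L - 1 := by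
      filter_upwards [eventually_ge_atTop (x₀ + (L - 1 - f x₀) / c)] with z hz
      have hd : c * ((L - 1 - f x₀) / c) = L - 1 - f x₀ := by
        rw [mul_comm]
        exact div_mul_cancel₀ _ (ne_of_lt hcneg)
      have := mul_le_mul_of_nonpos_left (show (L - 1 - f x₀) / c ≤ z - x₀ by linarith) hcneg.le
      rw [hd] at this
      linarith
    obtain ⟨z, hz1, hz2, hz3⟩ := (h2.and (h3.and h4)).exists
    linarith
  intro x
  by_cases hx0 : x = 0
  · subst hx0
    refine le_of_tendsto h0 ?_
    filter_upwards [eventually_mem_nhdsWithin] with t ht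
    exact EReal.coe_le_coe_iff.2 (hf_le t ht)
  · by_cases hxt : x = ⊤
    · rw [hxt, htopL]
    · rw [hmid x hx0 hxt]
      exact EReal.coe_le_coe_iff.2 (hf_le _ (ENNReal.toReal_pos hx0 hxt))
end FL


lemma pullout {Ω : Type*} {m : MeasurableSpace Ω} {mΩ : MeasurableSpace Ω} (hm : m ≤ mΩ)
    (μ : Measure Ω) {E G : Ω → ℝ≥0∞} (hE : Measurable E) (hGm : Measurable[m] G)
    (hEG : ∀ A : Set Ω, MeasurableSet[m] A → ∫⁻ ω in A, G ω ∂μ = ∫⁻ ω in A, E ω ∂μ)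
    {h : Ω → ℝ≥0∞} (hh : Measurable[m] h) :
    ∫⁻ ω, h ω * E ω ∂μ = ∫⁻ ω, h ω * G ω ∂μ := by
  have hG : Measurable G := hGm.mono hm le_rfl
  have hh' : Measurable h := hh.mono hm le_rfl
  have e1 : ∫⁻ ω, h ω * E ω ∂μ = ∫⁻ ω, h ω ∂(μ.withDensity E) := by
    rw [lintegral_withDensity_eq_lintegral_mul μ hE hh']
    exact lintegral_congr fun ω => mul_comm _ _
  have e2 : ∫⁻ ω, h ω * G ω ∂μ = ∫⁻ ω, h ω ∂(μ.withDensity G) := by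
    rw [lintegral_withDensity_eq_lintegral_mul μ hG hh']
    exact lintegral_congr fun ω => mul_comm _ _
  have trimEq : (μ.withDensity E).trim hm = (μ.withDensity G).trim hm := by
    refine @Measure.ext Ω m _ _ (fun s hs => ?_)
    rw [trim_measurableSet_eq hm hs, trim_measurableSet_eq hm hs,
      withDensity_apply _ (hm s hs), withDensity_apply _ (hm s hs)]
    exact (hEG s hs).symm
  rw [e1, e2, ← lintegral_trim hm hh, ← lintegral_trim hm hh, trimEq]

lemma setLIntegral_iUnion_sup {Ω : Type*} {mΩ : MeasurableSpace Ω} (μ : Measure Ω)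
    {h : Ω → ℝ≥0∞} (hh : Measurable h) {B : ℕ → Set Ω}
    (hBmeas : ∀ n, MeasurableSet (B n)) (hBmono : Monotone B) :
    ∫⁻ ω in ⋃ n, B n, h ω ∂μ = ⨆ n, ∫⁻ ω in B n, h ω ∂μ := by
  rw [← lintegral_indicator (MeasurableSet.iUnion hBmeas)]
  have heq : (⋃ n, B n).indicator h = fun ω => ⨆ n, (B n).indicator h ω := by
    funext ω
    by_cases hω : ω ∈ ⋃ n, B n
    · obtain ⟨n, hn⟩ := mem_iUnion.1 hω
      rw [indicator_of_mem hω]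
      apply le_antisymm
      · exact le_iSup_of_le n (le_of_eq (indicator_of_mem hn h).symm)
      · exact iSup_le fun k => Set.indicator_apply_le (fun _ => le_rfl)
    · rw [indicator_of_notMem hω]
      have hnot : ∀ n, ω ∉ B n := fun n hn => hω (mem_iUnion.2 ⟨n, hn⟩)
      symm
      rw [iSup_congr (fun n => indicator_of_notMem (hnot n) h)]
      simp
  rw [heq, lintegral_iSup (fun n => hh.indicator (hBmeas n))
    (fun i j hij ω => Set.indicator_le_indicator_of_subset (hBmono hij) (fun a => zero_le) ω)]
  exact iSup_congr fun n => lintegral_indicator (hBmeas n) h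


theorem main_aux {Ω : Type*} {m : MeasurableSpace Ω} {mΩ : MeasurableSpace Ω} (hm : m ≤ mΩ)
    (μ : Measure Ω) [IsProbabilityMeasure μ]
    {E G : Ω → ℝ≥0∞} (hE : Measurable E) (hGm : Measurable[m] G)
    (hEG : ∀ A : Set Ω, MeasurableSet[m] A → ∫⁻ ω in A, G ω ∂μ = ∫⁻ ω in A, E ω ∂μ)
    {f : ℝ → ℝ} {F : ℝ≥0∞ → EReal} (hF : IsConcaveExtension f F) :
    ∫⁻ ω, erealPos (F (E ω)) ∂μ + ∫⁻ ω, erealPos (-(F (G ω))) ∂μ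
      ≤ ∫⁻ ω, erealPos (F (G ω)) ∂μ + ∫⁻ ω, erealPos (-(F (E ω))) ∂μ := by
  obtain ⟨hconc, hmid, h0, htop⟩ := id hF
  have hG : Measurable G := hGm.mono hm le_rfl
  have hFm : Measurable F := measurable_F hF
  set PE : Ω → ℝ≥0∞ := fun ω => erealPos (F (E ω)) with hPEdef
  set NE : Ω → ℝ≥0∞ := fun ω => erealPos (-(F (E ω))) with hNEdef
  set PG : Ω → ℝ≥0∞ := fun ω => erealPos (F (G ω)) with hPGdef
  set NG : Ω → ℝ≥0∞ := fun ω => erealPos (-(F (G ω))) with hNGdef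
  have hPE : Measurable PE := measurable_erealPos.comp (hFm.comp hE)
  have hNE : Measurable NE := measurable_erealPos.comp ((hFm.comp hE).neg)
  have hPG : Measurable PG := measurable_erealPos.comp (hFm.comp hG)
  have hNG : Measurable NG := measurable_erealPos.comp ((hFm.comp hG).neg)
  set A0 : Set Ω := G ⁻¹' {0} with hA0def
  set Ainf : Set Ω := G ⁻¹' {⊤} with hAinfdef
  set Amid : Set Ω := (A0 ∪ Ainf)ᶜ with hAmiddef
  have hA0m : MeasurableSet[m] A0 := hGm (measurableSet_singleton _)
  have hAinfm : MeasurableSet[m] Ainf := hGm (measurableSet_singleton _)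
  have hAmidm : MeasurableSet[m] Amid := (hA0m.union hAinfm).compl
  have hAmid_mem : ∀ ω, ω ∈ Amid ↔ (G ω ≠ 0 ∧ G ω ≠ ⊤) := by
    intro ω
    simp [hAmiddef, hA0def, hAinfdef]
  have hdisj : Disjoint A0 Ainf := by
    rw [Set.disjoint_left]
    intro ω h1 h2
    rw [hA0def, mem_preimage, mem_singleton_iff] at h1
    rw [hAinfdef, mem_preimage, mem_singleton_iff] at h2
    rw [h1] at h2
    exact ENNReal.zero_ne_top h2
  have partition : ∀ h : Ω → ℝ≥0∞,
      ∫⁻ ω, h ω ∂μ = ∫⁻ ω in A0, h ω ∂μ + ∫⁻ ω in Ainf, h ω ∂μ + ∫⁻ ω in Amid, h ω ∂μ := by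
    intro h
    have hu : (A0 ∪ Ainf) ∪ Amid = univ := union_compl_self _
    rw [← setLIntegral_univ, ← hu,
      lintegral_union (hm _ hAmidm) disjoint_compl_right,
      lintegral_union (hm _ hAinfm) hdisj]
  -- Region A0
  have R0 : ∫⁻ ω in A0, PE ω ∂μ + ∫⁻ ω in A0, NG ω ∂μ
      ≤ ∫⁻ ω in A0, PG ω ∂μ + ∫⁻ ω in A0, NE ω ∂μ := by
    have hG0 : ∫⁻ ω in A0, G ω ∂μ = 0 := by
      have h1 : ∫⁻ ω in A0, G ω ∂μ = ∫⁻ _ in A0, (0:ℝ≥0∞) ∂μ :=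
        setLIntegral_congr_fun (hm _ hA0m)
          ((fun ω hω => by rw [hA0def, mem_preimage, mem_singleton_iff] at hω; exact hω))
      rw [h1]
      simp
    have hE0 : ∫⁻ ω in A0, E ω ∂μ = 0 := by rw [← hEG A0 hA0m]; exact hG0
    have hEae : ∀ᵐ ω ∂(μ.restrict A0), E ω = 0 := (lintegral_eq_zero_iff hE).1 hE0
    have hGae : ∀ᵐ ω ∂(μ.restrict A0), G ω = 0 :=
      (ae_restrict_iff' (hm _ hA0m)).2 (ae_of_all _ (fun ω hω => by
        rw [hA0def, mem_preimage, mem_singleton_iff] at hω; exact hω))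
    have e1 : ∫⁻ ω in A0, PE ω ∂μ = ∫⁻ ω in A0, PG ω ∂μ :=
      lintegral_congr_ae ((hEae.and hGae).mono (fun ω hω => by
        simp only [hPEdef, hPGdef, hω.1, hω.2]))
    have e2 : ∫⁻ ω in A0, NE ω ∂μ = ∫⁻ ω in A0, NG ω ∂μ :=
      lintegral_congr_ae ((hEae.and hGae).mono (fun ω hω => by
        simp only [hNEdef, hNGdef, hω.1, hω.2]))
    rw [e1, e2]
  -- Region Ainf
  have hGinf_mem : ∀ ω, ω ∈ Ainf → G ω = ⊤ := fun ω hω => by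
    rw [hAinfdef, mem_preimage, mem_singleton_iff] at hω; exact hω
  have Rinf : ∫⁻ ω in Ainf, PE ω ∂μ + ∫⁻ ω in Ainf, NG ω ∂μ
      ≤ ∫⁻ ω in Ainf, PG ω ∂μ + ∫⁻ ω in Ainf, NE ω ∂μ := by
    by_cases hμ : μ Ainf = 0
    · have hz : μ.restrict Ainf = 0 := Measure.restrict_eq_zero.2 hμ
      simp [hz]
    cases hFt : F ⊤ with
    | top =>
      have hPGtop : ∫⁻ ω in Ainf, PG ω ∂μ = ⊤ := by
        have h1 : ∫⁻ ω in Ainf, PG ω ∂μ = ∫⁻ _ in Ainf, (⊤:ℝ≥0∞) ∂μ :=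
          setLIntegral_congr_fun (hm _ hAinfm) ((fun ω hω => by
            simp only [hPGdef, hGinf_mem ω hω, hFt, erealPos_top]))
        rw [h1, setLIntegral_const, ENNReal.top_mul hμ]
      rw [hPGtop]
      simp
    | coe L =>
      have hle := F_le_const hF hFt
      have hNGc : ∫⁻ ω in Ainf, NG ω ∂μ = ENNReal.ofReal (-L) * μ Ainf := by
        have h1 : ∫⁻ ω in Ainf, NG ω ∂μ = ∫⁻ _ in Ainf, ENNReal.ofReal (-L) ∂μ :=
          setLIntegral_congr_fun (hm _ hAinfm) ((fun ω hω => by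
            simp only [hNGdef, hGinf_mem ω hω, hFt, erealPos_neg_coe]))
        rw [h1, setLIntegral_const]
      have hPGc : ∫⁻ ω in Ainf, PG ω ∂μ = ENNReal.ofReal L * μ Ainf := by
        have h1 : ∫⁻ ω in Ainf, PG ω ∂μ = ∫⁻ _ in Ainf, ENNReal.ofReal L ∂μ :=
          setLIntegral_congr_fun (hm _ hAinfm) ((fun ω hω => by
            simp only [hPGdef, hGinf_mem ω hω, hFt, erealPos_coe]))
        rw [h1, setLIntegral_const]
      have hpt : ∀ ω, PE ω + ENNReal.ofReal (-L) ≤ ENNReal.ofReal L + NE ω := by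
        intro ω
        have := ereal_key (hle (E ω))
        rwa [erealPos_coe, erealPos_neg_coe] at this
      calc ∫⁻ ω in Ainf, PE ω ∂μ + ∫⁻ ω in Ainf, NG ω ∂μ
          = ∫⁻ ω in Ainf, PE ω ∂μ + ENNReal.ofReal (-L) * μ Ainf := by rw [hNGc]
        _ = ∫⁻ ω in Ainf, (PE ω + ENNReal.ofReal (-L)) ∂μ := by
            rw [lintegral_add_right _ measurable_const, setLIntegral_const]
        _ ≤ ∫⁻ ω in Ainf, (ENNReal.ofReal L + NE ω) ∂μ :=
            setLIntegral_mono (measurable_const.add hNE) (fun ω _ => hpt ω)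
        _ = ENNReal.ofReal L * μ Ainf + ∫⁻ ω in Ainf, NE ω ∂μ := by
            rw [lintegral_add_left measurable_const, setLIntegral_const]
        _ = ∫⁻ ω in Ainf, PG ω ∂μ + ∫⁻ ω in Ainf, NE ω ∂μ := by rw [hPGc]
    | bot =>
      -- show ∫ NE over Ainf is ⊤
      have hGtop : ∫⁻ ω in Ainf, G ω ∂μ = ⊤ := by
        have h1 : ∫⁻ ω in Ainf, G ω ∂μ = ∫⁻ _ in Ainf, (⊤:ℝ≥0∞) ∂μ :=
          setLIntegral_congr_fun (hm _ hAinfm) ((fun ω hω => hGinf_mem ω hω))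
        rw [h1, setLIntegral_const, ENNReal.top_mul hμ]
      have hEtop : ∫⁻ ω in Ainf, E ω ∂μ = ⊤ := by rw [← hEG Ainf hAinfm]; exact hGtop
      -- choose chord with negative slope
      have hev : ∀ᶠ t in atTop, (f t : EReal) < ((f 1 : ℝ) : EReal) := by
        rw [hFt] at htop
        exact htop.eventually (eventually_lt_nhds (by simp : (⊥ : EReal) < ((f 1 : ℝ) : EReal)))
      obtain ⟨x₁, hx₁f, hx₁gt⟩ := (hev.and (eventually_gt_atTop 1)).exists
      have hx₁flt : f x₁ < f 1 := EReal.coe_lt_coe_iff.1 hx₁f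
      set c : ℝ := (f x₁ - f 1) / (x₁ - 1) with hcdef
      have hcneg : c < 0 := div_neg_of_neg_of_pos (by linarith) (by linarith)
      -- pointwise bound on W
      set W : Set Ω := Ainf ∩ {ω | ENNReal.ofReal x₁ ≤ E ω} with hWdef
      have hWmeas : MeasurableSet W :=
        (hm _ hAinfm).inter (measurableSet_le measurable_const hE)
      have hptW : ∀ ω ∈ W, ENNReal.ofReal (-c) * E ω ≤ NE ω + ENNReal.ofReal (f 1 - c) := by
        intro ω hω
        obtain ⟨_, hωE⟩ := hω
        by_cases hEt : E ω = ⊤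
        · have : NE ω = ⊤ := by
            have hFE : F (E ω) = ⊥ := by rw [hEt, hFt]
            simp only [hNEdef, hFE, erealPos_neg_bot]
          rw [this]
          simp
        · have ht0 : 0 < x₁ := by linarith
          have htle : x₁ ≤ (E ω).toReal := by
            rw [← ENNReal.ofReal_le_iff_le_toReal hEt]
            exact hωE
          set t := (E ω).toReal with htdef
          have htpos : 0 < t := lt_of_lt_of_le ht0 htle
          have hchord : f t ≤ f 1 + c * (t - 1) := by
            rcases eq_or_lt_of_le htle with hteq | htlt
            · rw [← hteq, hcdef]
              have : (f x₁ - f 1) / (x₁ - 1) * (x₁ - 1) = f x₁ - f 1 :=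
                div_mul_cancel₀ _ (sub_ne_zero.2 (ne_of_gt hx₁gt))
              linarith [this]
            · have hsl := concave_secant_anti hconc (by norm_num : (0:ℝ) < 1)
                (by linarith : (0:ℝ) < x₁) htpos (by intro hh; linarith)
                (by intro hh; linarith) (le_of_lt htlt)
              have := (div_le_iff₀ (by linarith : (0:ℝ) < t - 1)).1 hsl
              linarith
          have hE0' : E ω ≠ 0 :=
            (lt_of_lt_of_le (ENNReal.ofReal_pos.2 ht0) hωE).ne'
          have hNEeq : NE ω = ENNReal.ofReal (-(f t)) := by
            simp only [hNEdef, hmid (E ω) hE0' hEt, ← htdef, erealPos_neg_coe]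
          have hEeq : E ω = ENNReal.ofReal t := (ENNReal.ofReal_toReal hEt).symm
          rw [hNEeq, hEeq, ← ENNReal.ofReal_mul (by linarith : (0:ℝ) ≤ -c)]
          calc ENNReal.ofReal (-c * t) ≤ ENNReal.ofReal ((-(f t)) + (f 1 - c)) :=
              ENNReal.ofReal_le_ofReal (by nlinarith)
            _ ≤ ENNReal.ofReal (-(f t)) + ENNReal.ofReal (f 1 - c) := ENNReal.ofReal_add_le
      -- ∫ over W of E is ⊤
      have hWsub : W ⊆ Ainf := inter_subset_left
      have hEW : ∫⁻ ω in W, E ω ∂μ = ⊤ := by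
        by_contra hne
        have hfin2 : ∫⁻ ω in Ainf \ W, E ω ∂μ < ⊤ := by
          have hb : ∀ ω ∈ Ainf \ W, E ω ≤ ENNReal.ofReal x₁ := by
            intro ω hω
            have : ¬ (ENNReal.ofReal x₁ ≤ E ω) := by
              intro hh
              exact hω.2 ⟨hω.1, hh⟩
            exact le_of_not_ge this
          calc ∫⁻ ω in Ainf \ W, E ω ∂μ ≤ ∫⁻ _ in Ainf \ W, ENNReal.ofReal x₁ ∂μ :=
              setLIntegral_mono measurable_const hb
            _ = ENNReal.ofReal x₁ * μ (Ainf \ W) := setLIntegral_const _ _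
            _ < ⊤ := ENNReal.mul_lt_top ENNReal.ofReal_lt_top (measure_lt_top μ _)
        have : ∫⁻ ω in Ainf, E ω ∂μ < ⊤ := by
          calc ∫⁻ ω in Ainf, E ω ∂μ ≤ ∫⁻ ω in W ∪ (Ainf \ W), E ω ∂μ :=
              lintegral_mono_set (fun ω hω => by
                by_cases hw : ω ∈ W
                · exact mem_union_left _ hw
                · exact mem_union_right _ ⟨hω, hw⟩)
            _ ≤ ∫⁻ ω in W, E ω ∂μ + ∫⁻ ω in Ainf \ W, E ω ∂μ := lintegral_union_le _ _ _
            _ < ⊤ := ENNReal.add_lt_top.2 ⟨lt_top_iff_ne_top.2 hne, hfin2⟩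
        rw [hEtop] at this
        exact absurd this (lt_irrefl _)
      have hNEW : ∫⁻ ω in W, NE ω ∂μ = ⊤ := by
        by_contra hne
        have h1 : ENNReal.ofReal (-c) * ∫⁻ ω in W, E ω ∂μ
            ≤ ∫⁻ ω in W, NE ω ∂μ + ENNReal.ofReal (f 1 - c) * μ W := by
          rw [← lintegral_const_mul _ hE]
          calc ∫⁻ ω in W, ENNReal.ofReal (-c) * E ω ∂μ
              ≤ ∫⁻ ω in W, (NE ω + ENNReal.ofReal (f 1 - c)) ∂μ :=
              setLIntegral_mono (hNE.add measurable_const) hptW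
            _ = ∫⁻ ω in W, NE ω ∂μ + ENNReal.ofReal (f 1 - c) * μ W := by
              rw [lintegral_add_right _ measurable_const, setLIntegral_const]
        rw [hEW, ENNReal.mul_top (ENNReal.ofReal_pos.2 (neg_pos.2 hcneg)).ne'] at h1
        have : (⊤:ℝ≥0∞) < ⊤ := lt_of_le_of_lt h1 (ENNReal.add_lt_top.2
          ⟨lt_top_iff_ne_top.2 hne, ENNReal.mul_lt_top ENNReal.ofReal_lt_top (measure_lt_top μ _)⟩)
        exact absurd this (lt_irrefl _)
      have : ∫⁻ ω in Ainf, NE ω ∂μ = ⊤ :=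
        eq_top_iff.2 (hNEW ▸ lintegral_mono_set hWsub)
      rw [this]
      simp
  -- Region Amid
  set α : Ω → ℝ := fun ω => supSlopeExt f ((G ω).toReal) with hαdef
  have hαm : Measurable[m] α :=
    (measurable_supSlopeExt hconc).comp (ENNReal.measurable_toReal.comp hGm)
  have hαmΩ : Measurable α := hαm.mono hm le_rfl
  have hαpmΩ : Measurable fun ω => ENNReal.ofReal (α ω) :=
    ENNReal.measurable_ofReal.comp hαmΩ
  have hαm2mΩ : Measurable fun ω => ENNReal.ofReal (-(α ω)) :=
    ENNReal.measurable_ofReal.comp hαmΩ.neg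
  set B : ℕ → Set Ω := fun n => Amid ∩ G ⁻¹' (Iic (n:ℝ≥0∞)) ∩ α ⁻¹' (Icc (-(n:ℝ)) (n:ℝ))
    with hBdef
  have hBm : ∀ n, MeasurableSet[m] (B n) := fun n =>
    (hAmidm.inter (hGm measurableSet_Iic)).inter (hαm measurableSet_Icc)
  have hBmΩ : ∀ n, MeasurableSet (B n) := fun n => hm _ (hBm n)
  have hBmono : Monotone B := by
    intro i j hij ω hω
    obtain ⟨⟨h1, h2⟩, h3⟩ := hω
    have h2' : G ω ≤ (j:ℝ≥0∞) := le_trans (mem_Iic.1 h2) (Nat.cast_le.2 hij)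
    have h3a : -(j:ℝ) ≤ α ω := le_trans (neg_le_neg (Nat.cast_le.2 hij)) (mem_Icc.1 h3).1
    have h3b : α ω ≤ (j:ℝ) := le_trans (mem_Icc.1 h3).2 (Nat.cast_le.2 hij)
    exact ⟨⟨h1, h2'⟩, ⟨h3a, h3b⟩⟩
  have hBsub : ∀ n, B n ⊆ Amid := fun n ω hω => hω.1.1
  have hBunion : (⋃ n, B n) = Amid := by
    apply Subset.antisymm
    · exact iUnion_subset fun n ω hω => hω.1.1
    · intro ω hω
      obtain ⟨h1, h2⟩ := (hAmid_mem ω).1 hω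
      obtain ⟨n1, hn1⟩ := ENNReal.exists_nat_gt h2
      obtain ⟨n2, hn2⟩ := exists_nat_ge |α ω|
      refine mem_iUnion.2 ⟨max n1 n2, ⟨⟨hω, ?_⟩, ?_⟩⟩
      · exact le_trans hn1.le (Nat.cast_le.2 (le_max_left _ _))
      · have hb : |α ω| ≤ ((max n1 n2 : ℕ):ℝ) := le_trans hn2 (Nat.cast_le.2 (le_max_right _ _))
        exact mem_Icc.2 ⟨neg_le_of_abs_le hb, le_of_abs_le hb⟩
  have keyPt : ∀ ω ∈ Amid,
      PE ω + NG ω + ENNReal.ofReal (α ω) * G ω + ENNReal.ofReal (-(α ω)) * E ω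
        ≤ PG ω + NE ω + ENNReal.ofReal (α ω) * E ω + ENNReal.ofReal (-(α ω)) * G ω := by
    intro ω hω
    obtain ⟨h0', ht'⟩ := (hAmid_mem ω).1 hω
    have hGr : 0 < (G ω).toReal := ENNReal.toReal_pos h0' ht'
    set Gr := (G ω).toReal with hGrdef
    have hα_eq : α ω = supSlope f Gr := by
      simp only [hαdef, supSlopeExt]
      rw [← hGrdef, if_neg (not_le.2 hGr)]
    have hofg : ENNReal.ofReal Gr = G ω := ENNReal.ofReal_toReal ht'
    have hv : PG ω = ENNReal.ofReal (f Gr) := by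
      simp only [hPGdef, hmid _ h0' ht', erealPos_coe, ← hGrdef]
    have hnv : NG ω = ENNReal.ofReal (-(f Gr)) := by
      simp only [hNGdef, hmid _ h0' ht', erealPos_neg_coe, ← hGrdef]
    have key := key_pointwise (F := F) (v := f Gr) (α := supSlope f Gr) (Gr := Gr) hGr
      (fun t ht => by
        have hline := F_le_line hF hGr (ENNReal.ofReal t) ENNReal.ofReal_ne_top
        rwa [ENNReal.toReal_ofReal ht] at hline)
      (fun h => Ftop_le_of_slope_zero hF hGr h)
      (fun h => Ftop_eq_bot_of_slope_neg hF hGr h) (E ω)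
    rw [hofg] at key
    rw [hv, hnv, hα_eq]
    exact key
  have pulled : ∀ (n : ℕ) (k : Ω → ℝ≥0∞), Measurable[m] k →
      ∫⁻ ω in B n, k ω * E ω ∂μ = ∫⁻ ω in B n, k ω * G ω ∂μ := by
    intro n k hk
    have hmem := pullout hm μ hE hGm hEG (h := fun ω => (B n).indicator k ω)
      (hk.indicator (hBm n))
    have conv : ∀ (X : Ω → ℝ≥0∞),
        ∫⁻ ω, (B n).indicator k ω * X ω ∂μ = ∫⁻ ω in B n, k ω * X ω ∂μ := by
      intro X
      rw [← lintegral_indicator (hBmΩ n)]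
      apply lintegral_congr
      intro ω
      by_cases hω : ω ∈ B n
      · rw [indicator_of_mem hω, indicator_of_mem hω]
      · rw [indicator_of_notMem hω, indicator_of_notMem hω, zero_mul]
    rw [← conv E, ← conv G]
    exact hmem
  have hfin : ∀ (n : ℕ) (s : Ω → ℝ≥0∞), (∀ ω ∈ B n, s ω ≤ (n:ℝ≥0∞)) →
      ∫⁻ ω in B n, s ω * G ω ∂μ ≠ ⊤ := by
    intro n s hs
    have hb : ∀ ω ∈ B n, s ω * G ω ≤ (n:ℝ≥0∞) * (n:ℝ≥0∞) := by
      intro ω hω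
      exact mul_le_mul' (hs ω hω) (mem_Iic.1 hω.1.2)
    have hle : ∫⁻ ω in B n, s ω * G ω ∂μ ≤ ((n:ℝ≥0∞) * n) * μ (B n) := by
      rw [← setLIntegral_const]
      exact setLIntegral_mono measurable_const hb
    exact (lt_of_le_of_lt hle (ENNReal.mul_lt_top
      (ENNReal.mul_lt_top (ENNReal.natCast_lt_top n) (ENNReal.natCast_lt_top n))
      (measure_lt_top μ _))).ne
  have hαp_bd : ∀ (n : ℕ) ω, ω ∈ B n → ENNReal.ofReal (α ω) ≤ (n:ℝ≥0∞) := by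
    intro n ω hω
    calc ENNReal.ofReal (α ω) ≤ ENNReal.ofReal (n:ℝ) :=
        ENNReal.ofReal_le_ofReal (mem_Icc.1 hω.2).2
      _ = (n:ℝ≥0∞) := ENNReal.ofReal_natCast n
  have hαm2_bd : ∀ (n : ℕ) ω, ω ∈ B n → ENNReal.ofReal (-(α ω)) ≤ (n:ℝ≥0∞) := by
    intro n ω hω
    calc ENNReal.ofReal (-(α ω)) ≤ ENNReal.ofReal (n:ℝ) :=
        ENNReal.ofReal_le_ofReal (neg_le.1 (mem_Icc.1 hω.2).1)
      _ = (n:ℝ≥0∞) := ENNReal.ofReal_natCast n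
  have Rn : ∀ n : ℕ, ∫⁻ ω in B n, PE ω ∂μ + ∫⁻ ω in B n, NG ω ∂μ
      ≤ ∫⁻ ω in B n, PG ω ∂μ + ∫⁻ ω in B n, NE ω ∂μ := by
    intro n
    have int1 : ∫⁻ ω in B n,
        (PE ω + NG ω + ENNReal.ofReal (α ω) * G ω + ENNReal.ofReal (-(α ω)) * E ω) ∂μ
        ≤ ∫⁻ ω in B n,
        (PG ω + NE ω + ENNReal.ofReal (α ω) * E ω + ENNReal.ofReal (-(α ω)) * G ω) ∂μ :=
      setLIntegral_mono (((hPG.add hNE).add (hαpmΩ.mul hE)).add (hαm2mΩ.mul hG))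
        (fun ω hω => keyPt ω (hBsub n hω))
    rw [lintegral_add_left ((hPE.fun_add hNG).fun_add (hαpmΩ.fun_mul hG)),
      lintegral_add_left (hPE.fun_add hNG), lintegral_add_left hPE,
      lintegral_add_left ((hPG.fun_add hNE).fun_add (hαpmΩ.fun_mul hE)),
      lintegral_add_left (hPG.fun_add hNE), lintegral_add_left hPG] at int1
    rw [pulled n (fun ω => ENNReal.ofReal (α ω)) (ENNReal.measurable_ofReal.comp hαm),
      pulled n (fun ω => ENNReal.ofReal (-(α ω))) (ENNReal.measurable_ofReal.comp hαm.neg)]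
      at int1
    exact (ENNReal.add_le_add_iff_right
        (hfin n _ (fun ω hω => hαp_bd n ω hω))).1
      ((ENNReal.add_le_add_iff_right (hfin n _ (fun ω hω => hαm2_bd n ω hω))).1 int1)
  have hsup : ∀ (h : Ω → ℝ≥0∞), Measurable h →
      ∫⁻ ω in Amid, h ω ∂μ = ⨆ n, ∫⁻ ω in B n, h ω ∂μ := by
    intro h hh
    rw [← hBunion]
    exact setLIntegral_iUnion_sup μ hh hBmΩ hBmono
  have Rmid : ∫⁻ ω in Amid, PE ω ∂μ + ∫⁻ ω in Amid, NG ω ∂μ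
      ≤ ∫⁻ ω in Amid, PG ω ∂μ + ∫⁻ ω in Amid, NE ω ∂μ := by
    rw [hsup PE hPE, hsup NG hNG]
    rw [ENNReal.iSup_add_iSup (f := fun n => ∫⁻ ω in B n, PE ω ∂μ)
      (g := fun n => ∫⁻ ω in B n, NG ω ∂μ) (fun i j => ⟨max i j,
      add_le_add (lintegral_mono_set (hBmono (le_max_left i j)))
        (lintegral_mono_set (hBmono (le_max_right i j)))⟩)]
    apply iSup_le
    intro n
    exact le_trans (Rn n) (add_le_add (lintegral_mono_set (hBsub n))
      (lintegral_mono_set (hBsub n)))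
  -- assemble
  rw [partition PE, partition NE, partition PG, partition NG]
  have rearr : ∀ a b c d e g : ℝ≥0∞,
      a + b + c + (d + e + g) = (a + d) + ((b + e) + (c + g)) := by
    intros; ring
  rw [rearr, rearr]
  exact add_le_add R0 (add_le_add Rinf Rmid)


/-- Rao–Blackwellization improves expected concave utility: with `S` sufficient for `Θ`,
`E` an e-variable for `Θ₀`, `G = E_Θ[E | S]`, and `F` a concave utility extended to `[0,∞]`
by limits, for every `θ ∈ Θ`, `E_θ[F(G)] ≥ E_θ[F(E)]` whenever both expectations are
well-defined. -/
theorem rao_blackwell_stmt3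
    {Ω Θ : Type*} {mΩ : MeasurableSpace Ω} (P : Θ → Measure Ω)
    [∀ θ, IsProbabilityMeasure (P θ)]
    (Θ₀ Θ₁ : Set Θ) (hΘ : Θ₀ ∪ Θ₁ = Set.univ)
    (m : MeasurableSpace Ω) (hsuf : IsSufficient m P Set.univ)
    (E : Ω → ℝ≥0∞) (hE : Measurable[mΩ] E)
    (hEval : ∀ θ ∈ Θ₀, ∫⁻ ω, E ω ∂(P θ) ≤ 1)
    (G : Ω → ℝ≥0∞) (hG : IsUnivCondExpNN m P Set.univ E G)
    (f : ℝ → ℝ) (F : ℝ≥0∞ → EReal) (hF : IsConcaveExtension f F) :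
    ∀ θ : Θ, ExpDefined (P θ) (fun ω => F (E ω)) → ExpDefined (P θ) (fun ω => F (G ω)) →
      eexp (P θ) (fun ω => F (E ω)) ≤ eexp (P θ) (fun ω => F (G ω)) := by
  intro θ hdE hdG
  obtain ⟨hm, -⟩ := hsuf
  have hGm := hG.1
  have hCE := (hG.2 θ (Set.mem_univ θ)).2
  have key := main_aux hm (P θ) hE hGm hCE hF
  unfold eexp ExpDefined at *
  exact eexp_le_of hdE hdG key
end
end

section
/- Let S be sufficient for Θ, E any nonnegative random variable, and G := E_Θ[E | S]. Then, adopting the conventions 0/0 = 0 and ∞/∞ = 1, for every θ ∈ Θ one has E_θ[E/G | S] ≤ 1 P_θ-almost surely; consequently E_θ[E/G] ≤ 1 and E_θ[log(E/G)] ≤ 0. -/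
open MeasureTheory ENNReal Filter Set
open scoped Classical
noncomputable section

section RaoBlackwellAux

variable {Ω : Type*} {m : MeasurableSpace Ω} {mΩ : MeasurableSpace Ω}

lemma rb_pullout (hm : m ≤ mΩ)
    (μ : @Measure Ω mΩ) {E G : Ω → ℝ≥0∞} (hE : Measurable[mΩ] E) (hG : Measurable[m] G)
    (hid : ∀ A : Set Ω, MeasurableSet[m] A → ∫⁻ ω in A, G ω ∂μ = ∫⁻ ω in A, E ω ∂μ)
    {f : Ω → ℝ≥0∞} (hf : Measurable[m] f) :
    ∫⁻ ω, f ω * E ω ∂μ = ∫⁻ ω, f ω * G ω ∂μ := by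
  have hGΩ : Measurable[mΩ] G := hG.mono hm le_rfl
  refine @Measurable.ennreal_induction Ω m
    (fun f => ∫⁻ ω, f ω * E ω ∂μ = ∫⁻ ω, f ω * G ω ∂μ) ?_ ?_ ?_ f hf
  · intro c s hs
    have hsΩ : MeasurableSet[mΩ] s := hm s hs
    have h1 : ∀ (h : Ω → ℝ≥0∞), Measurable[mΩ] h → (∫⁻ ω, (s.indicator fun _ => c) ω * h ω ∂μ)
        = c * ∫⁻ ω in s, h ω ∂μ := by
      intro h hh
      have heq : ∀ ω, (s.indicator fun _ => c) ω * h ω = s.indicator (fun ω => c * h ω) ω := by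
        intro ω; rw [← Set.indicator_mul_left]
      simp_rw [heq]
      rw [lintegral_indicator hsΩ, lintegral_const_mul c hh]
    rw [h1 E hE, h1 G hGΩ, hid s hs]
  · intro f g _ hfm hgm hf hg
    have hfΩ : Measurable[mΩ] f := hfm.mono hm le_rfl
    simp only [Pi.add_apply, add_mul]
    rw [lintegral_add_left (f := fun ω => f ω * E ω) (hfΩ.mul hE), lintegral_add_left (f := fun ω => f ω * G ω) (hfΩ.mul hGΩ), hf, hg]
  · intro f hfm hmono hf
    have hfΩ : ∀ n, Measurable[mΩ] (f n) := fun n => (hfm n).mono hm le_rfl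
    have h1 : ∀ (h : Ω → ℝ≥0∞), Measurable[mΩ] h →
        (∫⁻ ω, (⨆ n, f n ω) * h ω ∂μ) = ⨆ n, ∫⁻ ω, f n ω * h ω ∂μ := by
      intro h hh
      simp_rw [ENNReal.iSup_mul]
      rw [lintegral_iSup (f := fun n ω => f n ω * h ω) (fun n => (hfΩ n).mul hh)]
      intro i j hij ω
      exact mul_le_mul_left (hmono hij ω) _
    rw [h1 E hE, h1 G hGΩ]
    exact iSup_congr hf

lemma rb_eratio_measurable {E G : Ω → ℝ≥0∞}
    (hE : Measurable[mΩ] E) (hG : Measurable[mΩ] G) :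
    Measurable[mΩ] (fun ω => eratio (E ω) (G ω)) := by
  unfold eratio
  have hset : MeasurableSet[mΩ] {ω | E ω = ⊤ ∧ G ω = ⊤} := by
    have : {ω | E ω = ⊤ ∧ G ω = ⊤} = (E ⁻¹' {⊤}) ∩ (G ⁻¹' {⊤}) := by
      ext ω; simp [Set.mem_setOf_eq]
    rw [this]
    exact (hE (measurableSet_singleton ⊤)).inter (hG (measurableSet_singleton ⊤))
  exact Measurable.ite hset measurable_const (hE.div hG)

lemma rb_log_ineq (x : ℝ≥0∞) :
    erealPos (elog x) + 1 ≤ x + erealPos (-(elog x)) := by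
  rcases eq_or_ne x 0 with h0 | h0
  · simp [h0, elog, erealPos]
  rcases eq_or_ne x ⊤ with ht | ht
  · simp [ht, elog, erealPos, h0]
  set t := x.toReal with hts
  have hx : 0 < t := ENNReal.toReal_pos h0 ht
  have hlog : Real.log t ≤ t - 1 := Real.log_le_sub_one_of_pos hx
  have helog : elog x = ((Real.log t : ℝ) : EReal) := by simp [elog, h0, ht, hts]
  have h1 : erealPos (elog x) = ENNReal.ofReal (Real.log t) := by
    rw [helog]; simp [erealPos]
  have h2 : erealPos (-(elog x)) = ENNReal.ofReal (-(Real.log t)) := by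
    rw [helog]
    rw [show (-((Real.log t : ℝ) : EReal)) = (((-Real.log t : ℝ)) : EReal) by norm_cast]
    simp [erealPos]
  have hxt : ENNReal.ofReal t = x := ENNReal.ofReal_toReal ht
  rw [h1, h2]
  rcases le_or_gt 0 (Real.log t) with hc | hc
  · have hz : ENNReal.ofReal (-Real.log t) = 0 := ENNReal.ofReal_of_nonpos (by linarith)
    rw [hz, add_zero]
    calc ENNReal.ofReal (Real.log t) + 1 = ENNReal.ofReal (Real.log t + 1) := by
          rw [ENNReal.ofReal_add hc zero_le_one, ENNReal.ofReal_one]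
      _ ≤ ENNReal.ofReal t := ENNReal.ofReal_le_ofReal (by linarith)
      _ = x := hxt
  · have hz : ENNReal.ofReal (Real.log t) = 0 := ENNReal.ofReal_of_nonpos hc.le
    rw [hz, zero_add]
    calc (1:ℝ≥0∞) = ENNReal.ofReal 1 := by simp
      _ ≤ ENNReal.ofReal (t + -Real.log t) := ENNReal.ofReal_le_ofReal (by linarith)
      _ = ENNReal.ofReal t + ENNReal.ofReal (-Real.log t) :=
          ENNReal.ofReal_add hx.le (by linarith)
      _ = x + ENNReal.ofReal (-Real.log t) := by rw [hxt]

lemma rb_pos_elog_measurable : Measurable (fun x : ℝ≥0∞ => erealPos (elog x)) := by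
  have heq : (fun x : ℝ≥0∞ => erealPos (elog x))
      = fun x => if x = ⊤ then ⊤ else ENNReal.ofReal (Real.log x.toReal) := by
    funext x
    rcases eq_or_ne x ⊤ with ht | ht
    · simp [ht, elog, erealPos]
    rcases eq_or_ne x 0 with h0 | h0
    · simp [h0, ht, elog, erealPos]
    · simp [elog, erealPos, h0, ht]
  rw [heq]
  exact Measurable.ite (measurableSet_singleton ⊤) measurable_const
    (ENNReal.measurable_ofReal.comp (Real.measurable_log.comp ENNReal.measurable_toReal))

lemma rb_neg_elog_measurable : Measurable (fun x : ℝ≥0∞ => erealPos (-(elog x))) := by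
  have heq : (fun x : ℝ≥0∞ => erealPos (-(elog x)))
      = fun x => if x = 0 then ⊤ else ENNReal.ofReal (-(Real.log x.toReal)) := by
    funext x
    rcases eq_or_ne x 0 with h0 | h0
    · simp [h0, elog, erealPos]
    rcases eq_or_ne x ⊤ with ht | ht
    · have he : elog x = ⊤ := by simp [elog, h0, ht]
      rw [he, ht]
      have hneg : (-(⊤:EReal)) = ⊥ := rfl
      rw [hneg]
      have hl : erealPos ⊥ = 0 := by simp [erealPos]
      rw [hl]
      simp [erealPos]
    · have hcast : (-(((Real.log x.toReal : ℝ)) : EReal)) = (((-Real.log x.toReal : ℝ)) : EReal) := by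
        norm_cast
      have he : elog x = ((Real.log x.toReal : ℝ) : EReal) := by simp [elog, h0, ht]
      rw [he, hcast, if_neg h0]
      simp [erealPos]
  rw [heq]
  exact Measurable.ite (measurableSet_singleton 0) measurable_const
    (ENNReal.measurable_ofReal.comp
      (Real.measurable_log.comp ENNReal.measurable_toReal).neg)


lemma rb_key (hm : m ≤ mΩ)
    (μ : @Measure Ω mΩ) {E G : Ω → ℝ≥0∞} (hE : Measurable[mΩ] E) (hG : Measurable[m] G)
    (hid : ∀ A : Set Ω, MeasurableSet[m] A → ∫⁻ ω in A, G ω ∂μ = ∫⁻ ω in A, E ω ∂μ)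
    {A : Set Ω} (hA : MeasurableSet[m] A) :
    ∫⁻ ω in A, eratio (E ω) (G ω) ∂μ ≤ μ A := by
  have hGΩ : Measurable[mΩ] G := hG.mono hm le_rfl
  set r : Ω → ℝ≥0∞ := fun ω => eratio (E ω) (G ω) with hr
  set B0 : Set Ω := {ω | G ω = 0} with hB0
  set B1 : Set Ω := {ω | G ω = ⊤} with hB1
  have hB0m : MeasurableSet[m] B0 := hG (measurableSet_singleton 0)
  have hB1m : MeasurableSet[m] B1 := hG (measurableSet_singleton ⊤)
  have hB0Ω : MeasurableSet[mΩ] B0 := hm _ hB0m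
  have hB1Ω : MeasurableSet[mΩ] B1 := hm _ hB1m
  have hsplit1 : ∫⁻ ω in A ∩ B0, r ω ∂μ + ∫⁻ ω in A \ B0, r ω ∂μ = ∫⁻ ω in A, r ω ∂μ :=
    lintegral_inter_add_diff r A hB0Ω
  have hsplit2 : ∫⁻ ω in (A \ B0) ∩ B1, r ω ∂μ + ∫⁻ ω in (A \ B0) \ B1, r ω ∂μ
      = ∫⁻ ω in A \ B0, r ω ∂μ := lintegral_inter_add_diff r (A \ B0) hB1Ω
  have hpart0 : ∫⁻ ω in A ∩ B0, r ω ∂μ = 0 := by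
    have hAB0m : MeasurableSet[m] (A ∩ B0) := hA.inter hB0m
    have hE0 : ∫⁻ ω in A ∩ B0, E ω ∂μ = 0 := by
      rw [← hid _ hAB0m]
      refine le_antisymm ?_ (zero_le)
      calc ∫⁻ ω in A ∩ B0, G ω ∂μ ≤ ∫⁻ _ in A ∩ B0, (0:ℝ≥0∞) ∂μ :=
            setLIntegral_mono measurable_const (fun ω hω => le_of_eq hω.2)
        _ = 0 := by simp
    have hEae : ∀ᵐ ω ∂(μ.restrict (A ∩ B0)), E ω = 0 := by
      have h := (lintegral_eq_zero_iff hE).1 hE0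
      filter_upwards [h] with ω hω using hω
    have hGae : ∀ᵐ ω ∂(μ.restrict (A ∩ B0)), ω ∈ A ∩ B0 :=
      ae_restrict_mem (hm _ hAB0m)
    rw [← lintegral_zero (μ := μ.restrict (A ∩ B0))]
    refine lintegral_congr_ae ?_
    filter_upwards [hEae, hGae] with ω hω1 hω2
    have hG0 : G ω = 0 := hω2.2
    simp [hr, eratio, hω1, hG0]
  have hpart1 : ∫⁻ ω in (A \ B0) ∩ B1, r ω ∂μ ≤ μ ((A \ B0) ∩ B1) := by
    calc ∫⁻ ω in (A \ B0) ∩ B1, r ω ∂μ ≤ ∫⁻ _ in (A \ B0) ∩ B1, (1:ℝ≥0∞) ∂μ := by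
          refine setLIntegral_mono measurable_const ?_
          intro ω hω
          have hGt : G ω = ⊤ := hω.2
          by_cases hEt : E ω = ⊤
          · simp [hr, eratio, hEt, hGt]
          · simp [hr, eratio, hEt, hGt, ENNReal.div_top]
      _ = μ ((A \ B0) ∩ B1) := by rw [setLIntegral_const]; ring
  have hpart2 : ∫⁻ ω in (A \ B0) \ B1, r ω ∂μ = μ ((A \ B0) \ B1) := by
    set C : Set Ω := (A \ B0) \ B1 with hC
    have hCm : MeasurableSet[m] C := (hA.diff hB0m).diff hB1m
    have hCΩ : MeasurableSet[mΩ] C := hm _ hCm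
    set f : Ω → ℝ≥0∞ := C.indicator (fun ω => (G ω)⁻¹) with hf
    have hfm : Measurable[m] f := (hG.inv).indicator hCm
    have hpull := rb_pullout hm μ hE hG hid hfm
    have hL : ∫⁻ ω, f ω * E ω ∂μ = ∫⁻ ω in C, r ω ∂μ := by
      have heq : ∀ ω, f ω * E ω = C.indicator (fun ω => r ω) ω := by
        intro ω
        by_cases hω : ω ∈ C
        · have hGne0 : G ω ≠ 0 := hω.1.2
          have hGnet : G ω ≠ ⊤ := hω.2
          simp only [hf, Set.indicator_of_mem hω]
          rw [hr]
          simp only [eratio, hGnet, and_false, if_false]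
          rw [ENNReal.div_eq_inv_mul]
        · simp [hf, Set.indicator_of_notMem hω]
      simp_rw [heq]
      rw [lintegral_indicator hCΩ]
    have hR : ∫⁻ ω, f ω * G ω ∂μ = μ C := by
      have heq : ∀ ω, f ω * G ω = C.indicator (fun _ => (1:ℝ≥0∞)) ω := by
        intro ω
        by_cases hω : ω ∈ C
        · have hGne0 : G ω ≠ 0 := hω.1.2
          have hGnet : G ω ≠ ⊤ := hω.2
          simp only [hf, Set.indicator_of_mem hω]
          exact ENNReal.inv_mul_cancel hGne0 hGnet
        · simp [hf, Set.indicator_of_notMem hω]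
      simp_rw [heq]
      rw [lintegral_indicator hCΩ, setLIntegral_const, one_mul]
    rw [← hL, hpull, hR]
  have hmeasure : μ ((A \ B0) ∩ B1) + μ ((A \ B0) \ B1) ≤ μ A := by
    rw [measure_inter_add_diff _ hB1Ω]
    exact measure_mono Set.diff_subset
  calc ∫⁻ ω in A, r ω ∂μ
      = ∫⁻ ω in A ∩ B0, r ω ∂μ + (∫⁻ ω in (A \ B0) ∩ B1, r ω ∂μ
        + ∫⁻ ω in (A \ B0) \ B1, r ω ∂μ) := by rw [hsplit2, hsplit1]
    _ = ∫⁻ ω in (A \ B0) ∩ B1, r ω ∂μ + ∫⁻ ω in (A \ B0) \ B1, r ω ∂μ := by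
        rw [hpart0, zero_add]
    _ ≤ μ ((A \ B0) ∩ B1) + μ ((A \ B0) \ B1) := add_le_add hpart1 hpart2.le
    _ ≤ μ A := hmeasure

lemma rb_coe_sub_nonpos {a b : ℝ≥0∞} (h : a ≤ b) (hb : b ≠ ⊤) :
    ((a : ℝ≥0∞) : EReal) - ((b : ℝ≥0∞) : EReal) ≤ 0 := by
  calc (a:EReal) - b ≤ (b:EReal) - b := EReal.sub_le_sub (by exact_mod_cast h) le_rfl
  _ ≤ 0 := by
    lift b to NNReal using hb
    rw [show ((b:ENNReal):EReal) = ((b:ℝ):EReal) by norm_cast]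
    rw [← EReal.coe_sub]; simp

end RaoBlackwellAux

/-- With `S` sufficient for `Θ`, `E` any nonnegative random variable and `G = E_Θ[E | S]`,
under the conventions `0/0 = 0` and `∞/∞ = 1`: for every `θ ∈ Θ`, any version of
`E_θ[E/G | S]` is at most `1` almost surely; consequently `E_θ[E/G] ≤ 1` and
`E_θ[log(E/G)] ≤ 0`. -/
theorem rao_blackwell_stmt4
    {Ω Θ : Type*} {mΩ : MeasurableSpace Ω} (P : Θ → Measure Ω)
    [∀ θ, IsProbabilityMeasure (P θ)]
    (m : MeasurableSpace Ω) (hsuf : IsSufficient m P Set.univ)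
    (E : Ω → ℝ≥0∞) (hE : Measurable[mΩ] E)
    (G : Ω → ℝ≥0∞) (hG : IsUnivCondExpNN m P Set.univ E G) :
    ∀ θ : Θ,
      (∀ H : Ω → ℝ≥0∞, IsCondExpNN m (P θ) (fun ω => eratio (E ω) (G ω)) H →
        ∀ᵐ ω ∂(P θ), H ω ≤ 1) ∧
      (∫⁻ ω, eratio (E ω) (G ω) ∂(P θ)) ≤ 1 ∧
      eexp (P θ) (fun ω => elog (eratio (E ω) (G ω))) ≤ 0 := by
  intro θ
  obtain ⟨hm, -⟩ := hsuf
  obtain ⟨hGm, hGid⟩ := hG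
  have hid := (hGid θ (Set.mem_univ θ)).2
  set μ := P θ with hμ
  set r : Ω → ℝ≥0∞ := fun ω => eratio (E ω) (G ω) with hr
  have hrm : Measurable[mΩ] r := rb_eratio_measurable hE (hGm.mono hm le_rfl)
  have hkey : ∀ A : Set Ω, MeasurableSet[m] A → ∫⁻ ω in A, r ω ∂μ ≤ μ A :=
    fun A hA => rb_key hm μ hE hGm hid hA
  have hint : (∫⁻ ω, r ω ∂μ) ≤ 1 := by
    have h := hkey Set.univ MeasurableSet.univ
    rwa [Measure.restrict_univ, measure_univ] at h
  refine ⟨?_, hint, ?_⟩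
  · rintro H ⟨hHm, hHid⟩
    set A : ℕ → Set Ω := fun n => {ω | 1 + ((n : ℝ≥0∞))⁻¹ ≤ H ω} with hA
    have hAm : ∀ n, MeasurableSet[m] (A n) := fun n => hHm measurableSet_Ici
    have hAnull : ∀ n, μ (A n) = 0 := by
      intro n
      by_contra hne
      have hfin : μ (A n) < ⊤ := measure_lt_top μ _
      have hlow : (1 + ((n : ℝ≥0∞))⁻¹) * μ (A n) ≤ ∫⁻ ω in A n, H ω ∂μ := by
        rw [← setLIntegral_const]
        exact setLIntegral_mono (hHm.mono hm le_rfl) (fun ω hω => hω)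
      have hup : ∫⁻ ω in A n, H ω ∂μ ≤ μ (A n) := by
        rw [hHid (A n) (hAm n)]
        exact hkey (A n) (hAm n)
      have hcontra : μ (A n) < (1 + ((n : ℝ≥0∞))⁻¹) * μ (A n) := by
        rw [add_mul, one_mul]
        exact ENNReal.lt_add_right hfin.ne
          (mul_ne_zero (ENNReal.inv_ne_zero.2 (by simp)) hne)
      exact absurd (hlow.trans hup) (not_le.2 hcontra)
    have hsub : {ω | ¬ H ω ≤ 1} ⊆ ⋃ n, A n := by
      intro ω hω
      have h1 : (1:ℝ≥0∞) < H ω := not_le.1 hω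
      have hne : H ω - 1 ≠ 0 := by
        rw [← pos_iff_ne_zero]
        exact tsub_pos_iff_lt.2 h1
      obtain ⟨n, hn⟩ := ENNReal.exists_inv_nat_lt hne
      refine Set.mem_iUnion.2 ⟨n, ?_⟩
      have hle : 1 + ((n : ℝ≥0∞))⁻¹ ≤ 1 + (H ω - 1) := add_le_add le_rfl hn.le
      rw [add_tsub_cancel_of_le h1.le] at hle
      exact hle
    exact measure_mono_null hsub (measure_iUnion_null hAnull)
  · set Ip := ∫⁻ ω, erealPos (elog (r ω)) ∂μ with hIp
    set In := ∫⁻ ω, erealPos (-(elog (r ω))) ∂μ with hIn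
    have hIpm : Measurable[mΩ] (fun ω => erealPos (elog (r ω))) :=
      rb_pos_elog_measurable.comp hrm
    have hsum : Ip + 1 ≤ 1 + In := by
      calc Ip + 1 = ∫⁻ ω, (erealPos (elog (r ω)) + 1) ∂μ := by
            rw [lintegral_add_left hIpm, lintegral_one, measure_univ]
        _ ≤ ∫⁻ ω, (r ω + erealPos (-(elog (r ω)))) ∂μ :=
            lintegral_mono (fun ω => rb_log_ineq (r ω))
        _ = (∫⁻ ω, r ω ∂μ) + In := lintegral_add_left hrm _
        _ ≤ 1 + In := add_le_add hint le_rfl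
    show ((Ip : ℝ≥0∞) : EReal) - ((In : ℝ≥0∞) : EReal) ≤ 0
    rcases eq_or_ne In ⊤ with ht | ht
    · rw [ht]
      have hb : ((Ip : ℝ≥0∞) : EReal) - ((⊤ : ℝ≥0∞) : EReal) = ⊥ := by
        simp [sub_eq_add_neg]
      rw [hb]; exact bot_le
    · have hle : Ip ≤ In := by
        have h := hsum.trans (le_of_eq (add_comm (1:ℝ≥0∞) In))
        exact (ENNReal.add_le_add_iff_right one_ne_top).1 h
      exact rb_coe_sub_nonpos hle ht
end
end

section
/- Let (S_t)_{t≥0} be a sufficient filtration for Θ with S_t ⊆ F_t, let (E_t) be an e-process for Θ₀ with respect to (F_t), and define G_t := E_Θ[E_t | S_t]. Then for any (S_t)-stopping time τ and any θ ∈ Θ, G_τ = E_θ[E_τ | S_τ] P_θ-almost surely. -/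
open MeasureTheory ENNReal Filter Set
open scoped Classical
noncomputable section

/-- With `(𝓢 t) ⊆ (𝓕 t)` a sufficient filtration for `Θ`, `(E t)` an e-process for `Θ₀`
w.r.t. `(𝓕 t)`, and `G t := E_Θ[E t | 𝓢 t]`, for every `(𝓢 t)`-stopping time `τ` and every
`θ ∈ Θ`, the stopped variable `G_τ` is a version of `E_θ[E_τ | 𝓢_τ]`. -/
theorem rao_blackwell_stmt7
    {Ω Θ : Type*} {mΩ : MeasurableSpace Ω} (P : Θ → Measure Ω)
    [∀ θ, IsProbabilityMeasure (P θ)]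
    (Θ₀ Θ₁ : Set Θ) (hΘ : Θ₀ ∪ Θ₁ = Set.univ)
    (𝓕 𝓢 : Filtration ℕ mΩ) (hle : ∀ t, 𝓢 t ≤ 𝓕 t)
    -- `(𝓢 t)` is a sufficient filtration: θ-free conditional expectations of
    -- `𝓕 t`-measurable nonnegative functions given `𝓢 t` exist
    (hsuf : ∀ t, ∀ h : Ω → ℝ≥0∞, Measurable[𝓕 t] h →
      ∃ g, Measurable[𝓢 t] g ∧ ∀ θ : Θ, ∀ A : Set Ω, MeasurableSet[𝓢 t] A →
        ∫⁻ ω in A, g ω ∂(P θ) = ∫⁻ ω in A, h ω ∂(P θ))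
    -- `(E t)` is an e-process for `Θ₀` w.r.t. `(𝓕 t)`
    (E : ℕ → Ω → ℝ≥0∞) (hEadp : ∀ t, Measurable[𝓕 t] (E t))
    (hEproc : ∀ σ : Ω → ℕ, IsStoppingTime 𝓕 (fun ω => (σ ω : WithTop ℕ)) → ∀ θ ∈ Θ₀,
      ∫⁻ ω, stoppedValue E (fun ω => (σ ω : WithTop ℕ)) ω ∂(P θ) ≤ 1)
    -- `G t` is the universal conditional expectation `E_Θ[E t | 𝓢 t]`
    (G : ℕ → Ω → ℝ≥0∞)
    (hG : ∀ t, Measurable[𝓢 t] (G t) ∧ ∀ θ : Θ, ∀ A : Set Ω, MeasurableSet[𝓢 t] A →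
      ∫⁻ ω in A, G t ω ∂(P θ) = ∫⁻ ω in A, E t ω ∂(P θ))
    (τ : Ω → ℕ) (hτ : IsStoppingTime 𝓢 (fun ω => (τ ω : WithTop ℕ))) :
    Measurable[hτ.measurableSpace] (stoppedValue G (fun ω => (τ ω : WithTop ℕ))) ∧
      ∀ θ : Θ, ∀ A : Set Ω, MeasurableSet[hτ.measurableSpace] A →
        ∫⁻ ω in A, stoppedValue G (fun ω => (τ ω : WithTop ℕ)) ω ∂(P θ) = ∫⁻ ω in A, stoppedValue E (fun ω => (τ ω : WithTop ℕ)) ω ∂(P θ) := by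
  constructor
  · intro s hs
    have hτeq : ∀ t : ℕ, MeasurableSet[𝓢 t] {ω | τ ω = t} := by
      intro t
      have := hτ.measurableSet_eq t
      simpa using this
    have h1 : ∀ n : ℕ, MeasurableSet[𝓢 n]
        (stoppedValue G (fun ω => (τ ω : WithTop ℕ)) ⁻¹' s ∩ {ω | τ ω ≤ n}) := by
      intro n
      have heq : stoppedValue G (fun ω => (τ ω : WithTop ℕ)) ⁻¹' s ∩ {ω | τ ω ≤ n}
          = ⋃ t ∈ Finset.range (n+1), ({ω | τ ω = t} ∩ G t ⁻¹' s) := by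
        ext ω
        simp only [Set.mem_inter_iff, Set.mem_preimage, Set.mem_setOf_eq, Set.mem_iUnion,
          Finset.mem_range, stoppedValue, WithTop.untopA, WithTop.untopD_coe]
        constructor
        · rintro ⟨h1, h2⟩
          exact ⟨τ ω, Nat.lt_succ_of_le h2, rfl, h1⟩
        · rintro ⟨t, ht, rfl, h1⟩
          exact ⟨h1, Nat.lt_succ_iff.mp ht⟩
      rw [heq]
      refine MeasurableSet.biUnion (Finset.range (n+1)).countable_toSet (fun t ht => ?_)
      have htn : t ≤ n := Nat.lt_succ_iff.mp (Finset.mem_range.mp ht)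
      exact 𝓢.mono htn _ (((hτeq t).inter ((hG t).1 hs)))
    have h2 : ∀ n : ℕ, MeasurableSet[𝓢 n]
        (stoppedValue G (fun ω => (τ ω : WithTop ℕ)) ⁻¹' s ∩ {ω | (τ ω : WithTop ℕ) ≤ (n : WithTop ℕ)}) := by
      intro n
      have hcoe : {ω | (τ ω : WithTop ℕ) ≤ (n : WithTop ℕ)} = {ω | τ ω ≤ n} := by
        ext ω; simp
      rw [hcoe]
      exact h1 n
    refine ⟨?_, h2⟩
    have hU : stoppedValue G (fun ω => (τ ω : WithTop ℕ)) ⁻¹' s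
        = ⋃ n : ℕ, (stoppedValue G (fun ω => (τ ω : WithTop ℕ)) ⁻¹' s ∩ {ω | (τ ω : WithTop ℕ) ≤ (n : WithTop ℕ)}) := by
      ext ω
      simp only [Set.mem_iUnion, Set.mem_inter_iff, Set.mem_setOf_eq]
      exact ⟨fun h => ⟨τ ω, h, le_rfl⟩, fun ⟨_, h, _⟩ => h⟩
    rw [hU]
    exact MeasurableSet.iUnion fun n => le_iSup (fun t => 𝓢 t) n _ (h2 n)
  · intro θ A hA
    have hAt : ∀ t, MeasurableSet[𝓢 t] (A ∩ {ω | τ ω = t}) := by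
      intro t
      have := (hτ.measurableSet_inter_eq_iff A t).mp (MeasurableSet.inter hA (hτ.measurableSet_eq' t))
      simpa using this
    have hAt' : ∀ t, MeasurableSet (A ∩ {ω | τ ω = t}) :=
      fun t => (𝓢.le t) _ (hAt t)
    have hAeq : A = ⋃ t, A ∩ {ω | τ ω = t} := by
      ext ω; simp only [Set.mem_iUnion, Set.mem_inter_iff, Set.mem_setOf_eq]
      exact ⟨fun h => ⟨τ ω, h, rfl⟩, fun ⟨t, h, _⟩ => h⟩
    have hdisj : Pairwise (Function.onFun Disjoint fun t => A ∩ {ω | τ ω = t}) := by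
      intro i j hij
      refine Set.disjoint_left.mpr ?_
      rintro ω ⟨_, hi⟩ ⟨_, hj⟩
      exact hij (hi.symm.trans hj)
    have key : ∀ (f : ℕ → Ω → ℝ≥0∞),
        ∫⁻ ω in A, stoppedValue f (fun ω => (τ ω : WithTop ℕ)) ω ∂(P θ) = ∑' t, ∫⁻ ω in A ∩ {ω | τ ω = t}, f t ω ∂(P θ) := by
      intro f
      conv_lhs => rw [hAeq]
      rw [lintegral_iUnion hAt' hdisj]
      congr 1
      ext t
      refine setLIntegral_congr_fun_ae (hAt' t) (Filter.Eventually.of_forall ?_)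
      rintro ω ⟨_, hω⟩
      simp only [Set.mem_setOf_eq] at hω
      simp only [stoppedValue, hω]
      rfl
    rw [key G, key E]
    congr 1
    ext t
    exact (hG t).2 θ _ (hAt t)
end
end

section
/- With the setup of the sufficient filtration (S_t) ⊆ (F_t) and e-process (E_t) for Θ₀, the process (G_t) with G_t := E_Θ[E_t | S_t] is an e-process for Θ₀ with respect to (S_t): for every (S_t)-stopping time τ and θ₀ ∈ Θ₀, E_{θ₀}[G_τ] ≤ 1. -/
open MeasureTheory ENNReal Filter Set
open scoped Classical
noncomputable section

/-- The integral of a stopped value decomposes as a sum over the value of the stopping time. -/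
lemma lintegral_stoppedValue_eq_tsum {Ω : Type*} {mΩ : MeasurableSpace Ω}
    (μ : Measure Ω) (f : ℕ → Ω → ℝ≥0∞) (τ : Ω → ℕ)
    (hτ : ∀ t : ℕ, MeasurableSet {ω | τ ω = t}) :
    ∫⁻ ω, stoppedValue f (fun ω => (τ ω : WithTop ℕ)) ω ∂μ = ∑' t : ℕ, ∫⁻ ω in {ω | τ ω = t}, f t ω ∂μ := by
  have hU : (⋃ t : ℕ, {ω | τ ω = t}) = Set.univ := by
    ext ω; simp [Set.mem_iUnion]
  calc ∫⁻ ω, stoppedValue f (fun ω => (τ ω : WithTop ℕ)) ω ∂μ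
      = ∫⁻ ω in ⋃ t : ℕ, {ω | τ ω = t}, stoppedValue f (fun ω => (τ ω : WithTop ℕ)) ω ∂μ := by
        rw [hU, Measure.restrict_univ]
    _ = ∑' t : ℕ, ∫⁻ ω in {ω | τ ω = t}, stoppedValue f (fun ω => (τ ω : WithTop ℕ)) ω ∂μ := by
        refine lintegral_iUnion hτ ?_ _
        intro i j hij
        refine Set.disjoint_left.mpr ?_
        intro ω hi hj
        exact hij (hi.symm.trans hj)
    _ = ∑' t : ℕ, ∫⁻ ω in {ω | τ ω = t}, f t ω ∂μ := by
        refine tsum_congr fun t => ?_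
        refine setLIntegral_congr_fun (hτ t) ?_
        intro ω hω
        simp only [Set.mem_setOf_eq] at hω
        subst hω
        rfl

/-- With `(𝓢 t) ⊆ (𝓕 t)` a sufficient filtration for `Θ` and `(E t)` an e-process for `Θ₀`
w.r.t. `(𝓕 t)`, the process `G t := E_Θ[E t | 𝓢 t]` is an e-process for `Θ₀` w.r.t.
`(𝓢 t)`: for every `(𝓢 t)`-stopping time `τ` and `θ₀ ∈ Θ₀`, `E_{θ₀}[G_τ] ≤ 1`. -/
theorem rao_blackwell_stmt8
    {Ω Θ : Type*} {mΩ : MeasurableSpace Ω} (P : Θ → Measure Ω)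
    [∀ θ, IsProbabilityMeasure (P θ)]
    (Θ₀ Θ₁ : Set Θ) (hΘ : Θ₀ ∪ Θ₁ = Set.univ)
    (𝓕 𝓢 : Filtration ℕ mΩ) (hle : ∀ t, 𝓢 t ≤ 𝓕 t)
    (hsuf : ∀ t, ∀ h : Ω → ℝ≥0∞, Measurable[𝓕 t] h →
      ∃ g, Measurable[𝓢 t] g ∧ ∀ θ : Θ, ∀ A : Set Ω, MeasurableSet[𝓢 t] A →
        ∫⁻ ω in A, g ω ∂(P θ) = ∫⁻ ω in A, h ω ∂(P θ))
    (E : ℕ → Ω → ℝ≥0∞) (hEadp : ∀ t, Measurable[𝓕 t] (E t))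
    (hEproc : ∀ σ : Ω → ℕ, IsStoppingTime 𝓕 (fun ω => (σ ω : WithTop ℕ)) → ∀ θ ∈ Θ₀,
      ∫⁻ ω, stoppedValue E (fun ω => (σ ω : WithTop ℕ)) ω ∂(P θ) ≤ 1)
    (G : ℕ → Ω → ℝ≥0∞)
    (hG : ∀ t, Measurable[𝓢 t] (G t) ∧ ∀ θ : Θ, ∀ A : Set Ω, MeasurableSet[𝓢 t] A →
      ∫⁻ ω in A, G t ω ∂(P θ) = ∫⁻ ω in A, E t ω ∂(P θ))
    (τ : Ω → ℕ) (hτ : IsStoppingTime 𝓢 (fun ω => (τ ω : WithTop ℕ))) :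
    ∀ θ₀ ∈ Θ₀, ∫⁻ ω, stoppedValue G (fun ω => (τ ω : WithTop ℕ)) ω ∂(P θ₀) ≤ 1 := by
  intro θ₀ hθ₀
  have hτF : IsStoppingTime 𝓕 (fun ω => (τ ω : WithTop ℕ)) := fun t => hle t _ (hτ t)
  have hmeasS : ∀ t : ℕ, MeasurableSet[𝓢 t] {ω | τ ω = t} := fun t =>
    by simpa using hτ.measurableSet_eq t
  have hmeas : ∀ t : ℕ, MeasurableSet {ω | τ ω = t} := fun t =>
    𝓢.le t _ (hmeasS t)
  have hGτ : ∫⁻ ω, stoppedValue G (fun ω => (τ ω : WithTop ℕ)) ω ∂(P θ₀)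
      = ∫⁻ ω, stoppedValue E (fun ω => (τ ω : WithTop ℕ)) ω ∂(P θ₀) := by
    rw [lintegral_stoppedValue_eq_tsum _ _ _ hmeas,
      lintegral_stoppedValue_eq_tsum _ _ _ hmeas]
    exact tsum_congr fun t => (hG t).2 θ₀ _ (hmeasS t)
  rw [hGτ]
  exact hEproc τ hτF θ₀ hθ₀
end
end
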